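/- arXiv:2107.07792 — 3 statements merged into one kernel-verified Lean document; each statement's English description precedes it below -/
import Mathlib

section
/- Let δ = δ' + δ'' with δ, δ', δ'' ≥ 0. Let a ≤ b in R, X the segment from a to b, Q : [0,1] → R a curve with Q(0) = a, Q(1) = b and d_F(Q, X) ≤ δ', and P : [0,1] → R a curve with d_F(P, X) ≤ δ. If |Q(0) − P(0)| ≤ δ'' and |Q(1) − P(1)| ≤ δ'', then d_F(P, Q) ≤ δ. -/
/-- Continuous Fréchet distance between curves on the unit interval. -/
noncomputable def frechetDist {E : Type*} [PseudoMetricSpace E] (P Q : unitInterval → E) : ℝ :=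
  sInf {r : ℝ | ∃ f g : unitInterval → unitInterval,
    Continuous f ∧ Monotone f ∧ Function.Surjective f ∧
    Continuous g ∧ Monotone g ∧ Function.Surjective g ∧
    ∀ t, dist (P (f t)) (Q (g t)) ≤ r}

/-- The directed line segment from `a` to `b`, parametrized linearly. -/
noncomputable def segCurve {E : Type*} [AddCommGroup E] [Module ℝ E] (a b : E) :
    unitInterval → E :=
  fun t => (1 - (t : ℝ)) • a + (t : ℝ) • b

/-- The polygonal curve with `n+1` vertices `p 0, …, p n`, parametrized uniformly. -/
noncomputable def polyCurve {E : Type*} [AddCommGroup E] [Module ℝ E]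
    (n : ℕ) (p : Fin (n + 1) → E) (t : unitInterval) : E :=
  let x : ℝ := (t : ℝ) * n
  let i : ℕ := min (Nat.floor x) (n - 1)
  (1 - (x - (i : ℝ))) • p ⟨min i n, Nat.lt_succ_of_le (min_le_right i n)⟩ +
    (x - (i : ℝ)) • p ⟨min (i + 1) n, Nat.lt_succ_of_le (min_le_right (i + 1) n)⟩

/-- The subcurve `Q[a,b]`, linearly reparametrized over the unit interval. -/
noncomputable def subcurve {E : Type*} (Q : unitInterval → E) (a b : unitInterval) :
    unitInterval → E :=
  fun s => Q ⟨(1 - (s : ℝ)) * (a : ℝ) + (s : ℝ) * (b : ℝ), Set.mem_Icc.mpr ⟨by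
      have hs0 := unitInterval.nonneg s; have hs1 := unitInterval.le_one s
      have ha0 := unitInterval.nonneg a; have hb0 := unitInterval.nonneg b
      have h1 : (0:ℝ) ≤ (1 - (s:ℝ)) * (a:ℝ) := mul_nonneg (by linarith) ha0
      have h2 : (0:ℝ) ≤ (s:ℝ) * (b:ℝ) := mul_nonneg hs0 hb0
      linarith, by
      have hs0 := unitInterval.nonneg s; have hs1 := unitInterval.le_one s
      have ha1 := unitInterval.le_one a; have hb1 := unitInterval.le_one b
      have h1 : (1 - (s:ℝ)) * (a:ℝ) ≤ (1 - (s:ℝ)) * 1 :=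
        mul_le_mul_of_nonneg_left ha1 (by linarith)
      have h2 : (s:ℝ) * (b:ℝ) ≤ (s:ℝ) * 1 := mul_le_mul_of_nonneg_left hb1 hs0
      linarith⟩⟩

/-- The parameter (in the uniform parametrization) of the `i`-th vertex of a
polygonal curve with `n` edges. -/
noncomputable def vparam (n : ℕ) (i : Fin (n + 1)) : unitInterval :=
  ⟨((i : ℕ) : ℝ) / (n : ℝ), Set.mem_Icc.mpr ⟨by positivity, by
    have h1 : ((i : ℕ) : ℝ) ≤ (n : ℝ) := by exact_mod_cast Nat.lt_succ_iff.mp i.isLt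
    rcases Nat.eq_zero_or_pos n with h | h
    · subst h; simp
    · rw [div_le_one (by exact_mod_cast h)]; exact h1⟩⟩

/-- `P` is `c`-monotone increasing. -/
def ApproxInc (c : ℝ) (P : unitInterval → ℝ) : Prop :=
  ∀ s t : unitInterval, s ≤ t → P s - c ≤ P t

/-- `P` is `c`-monotone decreasing. -/
def ApproxDec (c : ℝ) (P : unitInterval → ℝ) : Prop :=
  ∀ s t : unitInterval, s ≤ t → P t ≤ P s + c

/-- `P` is `c`-monotone. -/
def ApproxMono (c : ℝ) (P : unitInterval → ℝ) : Prop :=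
  ApproxInc c P ∨ ApproxDec c P

/-- Concatenation of two curves (first on `[0,1/2]`, second on `[1/2,1]`). -/
noncomputable def concatC {E : Type*} (P Q : unitInterval → E) : unitInterval → E :=
  fun t =>
    if h : (t : ℝ) ≤ 1 / 2 then
      P ⟨2 * (t : ℝ), Set.mem_Icc.mpr ⟨by have := unitInterval.nonneg t; linarith,
        by linarith⟩⟩
    else
      Q ⟨2 * (t : ℝ) - 1, Set.mem_Icc.mpr ⟨by push_neg at h; linarith,
        by have := unitInterval.le_one t; linarith⟩⟩

/-- The data of a `δ`-straightening of the curve `Q`: parameters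
`0 = t 0 < … < t (Fin.last ℓ) = 1` such that each shortcut segment is within
Fréchet distance `δ` of the corresponding subcurve (locality), and each
corresponding subcurve stays in the closed interval spanned by the shortcut's
endpoints (edge-range-preserving). -/
def StraighteningData (δ : ℝ) (Q : unitInterval → ℝ) (ℓ : ℕ)
    (t : Fin (ℓ + 1) → unitInterval) : Prop :=
  StrictMono t ∧ t 0 = 0 ∧ t (Fin.last ℓ) = 1 ∧
    ∀ i : Fin ℓ,
      frechetDist (segCurve (Q (t i.castSucc)) (Q (t i.succ)))
          (subcurve Q (t i.castSucc) (t i.succ)) ≤ δ ∧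
      ∀ s : unitInterval, t i.castSucc ≤ s → s ≤ t i.succ →
        Q s ∈ Set.uIcc (Q (t i.castSucc)) (Q (t i.succ))

/-- `Q'` is a `δ`-straightening of `Q`. -/
def IsStraightening (δ : ℝ) (Q Q' : unitInterval → ℝ) : Prop :=
  ∃ (ℓ : ℕ) (t : Fin (ℓ + 1) → unitInterval),
    StraighteningData δ Q ℓ t ∧ Q' = polyCurve ℓ (fun i => Q (t i))

/-- The data of a `δ`-signature of the curve `Q`: parameters
`0 = t 0 < … < t (Fin.last ℓ) = 1` with the locality property, non-degenerate
vertex-range-preserving interior vertices, and the `δ`-edge-length property. -/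
def SignatureData (δ : ℝ) (Q : unitInterval → ℝ) (ℓ : ℕ)
    (t : Fin (ℓ + 1) → unitInterval) : Prop :=
  StrictMono t ∧ t 0 = 0 ∧ t (Fin.last ℓ) = 1 ∧
    (∀ i : Fin ℓ,
      frechetDist (segCurve (Q (t i.castSucc)) (Q (t i.succ)))
          (subcurve Q (t i.castSucc) (t i.succ)) ≤ δ) ∧
    (∀ i : ℕ, ∀ _h1 : 0 < i, ∀ _h2 : i < ℓ,
      (Q (t ⟨i - 1, by omega⟩) < Q (t ⟨i, by omega⟩) ∧
        Q (t ⟨i + 1, by omega⟩) < Q (t ⟨i, by omega⟩) ∧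
        ∀ s : unitInterval, t ⟨i - 1, by omega⟩ ≤ s → s ≤ t ⟨i + 1, by omega⟩ →
          Q s ≤ Q (t ⟨i, by omega⟩)) ∨
      (Q (t ⟨i, by omega⟩) < Q (t ⟨i - 1, by omega⟩) ∧
        Q (t ⟨i, by omega⟩) < Q (t ⟨i + 1, by omega⟩) ∧
        ∀ s : unitInterval, t ⟨i - 1, by omega⟩ ≤ s → s ≤ t ⟨i + 1, by omega⟩ →
          Q (t ⟨i, by omega⟩) ≤ Q s)) ∧
    (∀ _h : 1 ≤ ℓ,
      δ < |Q (t ⟨1, by omega⟩) - Q (t 0)| ∧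
      δ < |Q (t (Fin.last ℓ)) - Q (t ⟨ℓ - 1, by omega⟩)|) ∧
    (∀ j : ℕ, ∀ _hj1 : 1 ≤ j, ∀ _hj2 : j + 2 ≤ ℓ,
      2 * δ < |Q (t ⟨j + 1, by omega⟩) - Q (t ⟨j, by omega⟩)|)

/-- `Q'` is a `δ`-signature of `Q`. -/
def IsSignature (δ : ℝ) (Q Q' : unitInterval → ℝ) : Prop :=
  ∃ (ℓ : ℕ) (t : Fin (ℓ + 1) → unitInterval),
    SignatureData δ Q ℓ t ∧ Q' = polyCurve ℓ (fun i => Q (t i))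

/-- Vertex `j` of the polygonal curve on `q` `δ`-visits vertex `a` of the
polygonal curve on `p` under the monotone traversal `(f, g)`: they are within
distance `δ`, and the traversal matches one of them to the other vertex or to the
interior of an edge incident to it. -/
def Visits (δ : ℝ) (m k : ℕ) (p : Fin (m + 1) → ℝ) (q : Fin (k + 1) → ℝ)
    (f g : unitInterval → unitInterval) (j : Fin (k + 1)) (a : Fin (m + 1)) : Prop :=
  |q j - p a| ≤ δ ∧
    ((∃ t : unitInterval, g t = vparam k j ∧ |(f t : ℝ) * (m : ℝ) - ((a : ℕ) : ℝ)| < 1) ∨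
     (∃ t : unitInterval, f t = vparam m a ∧ |(g t : ℝ) * (k : ℝ) - ((j : ℕ) : ℝ)| < 1))


set_option maxHeartbeats 2000000
attribute [local instance] Classical.propDecidable

namespace SegProxy



/-- Running maximum of `f · - ct`, floored at `a`. -/
def wSeq (f : ℕ → ℝ) (a ct : ℝ) : ℕ → ℝ
  | 0 => max a (f 0 - ct)
  | i+1 => max (wSeq f a ct i) (f (i+1) - ct)

variable {f : ℕ → ℝ} {a ct B : ℝ}

lemma wSeq_succ (i : ℕ) : wSeq f a ct (i+1) = max (wSeq f a ct i) (f (i+1) - ct) := rfl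

lemma wSeq_mono : Monotone (wSeq f a ct) :=
  monotone_nat_of_le_succ fun i => le_max_left _ _

lemma le_wSeq (i : ℕ) : a ≤ wSeq f a ct i := by
  induction i with
  | zero => exact le_max_left _ _
  | succ m ih => exact ih.trans (le_max_left _ _)

lemma sub_le_wSeq (i : ℕ) : f i - ct ≤ wSeq f a ct i := by
  cases i with
  | zero => exact le_max_right _ _
  | succ m => exact le_max_right _ _

lemma wSeq_le_of (i : ℕ) (hB : a ≤ B) (hfB : ∀ k, k ≤ i → f k - ct ≤ B) :
    wSeq f a ct i ≤ B := by
  induction i with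
  | zero => exact max_le hB (hfB 0 le_rfl)
  | succ m ih =>
      exact max_le (ih (fun k hk => hfB k (hk.trans (Nat.le_succ m)))) (hfB (m+1) le_rfl)

lemma wSeq_eq_floor (i : ℕ) (h : ∀ k, k ≤ i → f k - ct ≤ a) : wSeq f a ct i = a := by
  induction i with
  | zero => exact max_eq_left (h 0 le_rfl)
  | succ m ih =>
      rw [wSeq_succ, ih (fun k hk => h k (hk.trans (Nat.le_succ m))), max_eq_left (h (m+1) le_rfl)]

lemma wSeq_active (m : ℕ) (hlt : ∀ i, i < m → f i - ct ≤ a) (hgt : a < wSeq f a ct m) :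
    wSeq f a ct m = f m - ct := by
  cases m with
  | zero =>
      rcases le_or_gt (f 0 - ct) a with h1 | h1
      · rw [show wSeq f a ct 0 = max a (f 0 - ct) from rfl, max_eq_left h1] at hgt
        exact absurd hgt (lt_irrefl a)
      · exact max_eq_right h1.le
  | succ k =>
      have hk : wSeq f a ct k = a := wSeq_eq_floor k (fun i hi => hlt i (by omega))
      rw [wSeq_succ, hk] at hgt ⊢
      rcases le_or_gt (f (k+1) - ct) a with h1 | h1
      · rw [max_eq_left h1] at hgt
        exact absurd hgt (lt_irrefl a)
      · exact max_eq_right h1.le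

/-- First index `≤ N` where `f` crosses threshold `thr` (or `N` if none). -/
noncomputable def firstCross (f : ℕ → ℝ) (thr : ℝ) (N : ℕ) : ℕ :=
  if h : ∃ i, i ≤ N ∧ thr ≤ f i then Nat.find h else N

lemma firstCross_le_N {thr : ℝ} {N : ℕ} : firstCross f thr N ≤ N := by
  unfold firstCross
  split_ifs with h
  · exact (Nat.find_le h.choose_spec).trans h.choose_spec.1
  · exact le_rfl

lemma lt_firstCross {thr : ℝ} {N : ℕ} {i : ℕ} (hi : i < firstCross f thr N) :
    f i < thr := by
  unfold firstCross at hi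
  split_ifs at hi with h
  · have := Nat.find_min h hi
    push_neg at this
    exact this (le_of_lt (lt_of_lt_of_le hi ((Nat.find_le h.choose_spec).trans h.choose_spec.1)))
  · push_neg at h
    exact h i (le_of_lt hi)

lemma firstCross_spec {thr : ℝ} {N : ℕ} (h : ∃ i, i ≤ N ∧ thr ≤ f i) :
    thr ≤ f (firstCross f thr N) := by
  unfold firstCross
  rw [dif_pos h]
  exact (Nat.find_spec h).2

lemma firstCross_eq_N {thr : ℝ} {N : ℕ} (h : ¬ ∃ i, i ≤ N ∧ thr ≤ f i) :
    firstCross f thr N = N := by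
  unfold firstCross
  rw [dif_neg h]


inductive Stair (good : ℕ → ℕ → Prop) : ℕ → ℕ → Prop
  | base : good 0 0 → Stair good 0 0
  | right {i j : ℕ} : Stair good i j → good (i+1) j → Stair good (i+1) j
  | up {i j : ℕ} : Stair good i j → good i (j+1) → Stair good i (j+1)

end SegProxy

namespace SegProxy

theorem Stair.last {good : ℕ → ℕ → Prop} {i j : ℕ} (h : Stair good i j) : good i j := by
  cases h with
  | base h => exact h
  | right _ h => exact h
  | up _ h => exact h

theorem Stair.hrun {good : ℕ → ℕ → Prop} {i j i' : ℕ} (h : Stair good i j)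
    (hle : i ≤ i') (hgood : ∀ k, i < k → k ≤ i' → good k j) : Stair good i' j := by
  induction i' , hle using Nat.le_induction with
  | base => exact h
  | succ m hm ih =>
      exact Stair.right (ih (fun k hk hk' => hgood k hk (hk'.trans (Nat.le_succ m))))
        (hgood (m+1) (by omega) le_rfl)

theorem Stair.vrun {good : ℕ → ℕ → Prop} {i j j' : ℕ} (h : Stair good i j)
    (hle : j ≤ j') (hgood : ∀ k, j < k → k ≤ j' → good i k) : Stair good i j' := by
  induction j' , hle using Nat.le_induction with
  | base => exact h
  | succ m hm ih =>
      exact Stair.up (ih (fun k hk hk' => hgood k hk (hk'.trans (Nat.le_succ m))))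
        (hgood (m+1) (by omega) le_rfl)

/-- The core discrete matching construction. -/
theorem core (N : ℕ) (f g μ ν : ℕ → ℝ) (a b c' d'' e c ct C : ℝ)
    (hab : a ≤ b) (hc' : 0 ≤ c') (hd : 0 ≤ d'') (he : 0 < e)
    (hc : c = c' + d'') (hct : ct = c + 2*e) (hC : C = c + 4*e)
    (hμ : Monotone μ) (hν : Monotone ν)
    (hμa : ∀ i, a ≤ μ i) (hμb : ∀ i, μ i ≤ b)
    (hνa : ∀ j, a ≤ ν j) (hνb : ∀ j, ν j ≤ b)
    (hf : ∀ i, |f i - μ i| ≤ c) (hg : ∀ j, |g j - ν j| ≤ c')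
    (hfs : ∀ i, |f (i+1) - f i| ≤ e) (hgs : ∀ j, |g (j+1) - g j| ≤ e)
    (hg0 : g 0 = a) (hgN : g N = b)
    (hf0 : |f 0 - a| ≤ d'') (hfN : |f N - b| ≤ d'') :
    Stair (fun i j => |f i - g j| ≤ C) N N := by
  have hfU : ∀ i, f i ≤ μ i + c := fun i => by have := (abs_le.mp (hf i)).2; linarith
  have hfL : ∀ i, μ i - c ≤ f i := fun i => by have := (abs_le.mp (hf i)).1; linarith
  have hgU : ∀ j, g j ≤ ν j + c' := fun j => by have := (abs_le.mp (hg j)).2; linarith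
  have hgL : ∀ j, ν j - c' ≤ g j := fun j => by have := (abs_le.mp (hg j)).1; linarith
  have hfsU : ∀ i, f (i+1) ≤ f i + e := fun i => by have := (abs_le.mp (hfs i)).2; linarith
  have hfsL : ∀ i, f i - e ≤ f (i+1) := fun i => by have := (abs_le.mp (hfs i)).1; linarith
  have hgsU : ∀ j, g (j+1) ≤ g j + e := fun j => by have := (abs_le.mp (hgs j)).2; linarith
  have hgsL : ∀ j, g j - e ≤ g (j+1) := fun j => by have := (abs_le.mp (hgs j)).1; linarith
  have hf0U : f 0 ≤ a + d'' := by have := (abs_le.mp hf0).2; linarith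
  have hf0L : a - d'' ≤ f 0 := by have := (abs_le.mp hf0).1; linarith
  have hfNU : f N ≤ b + d'' := by have := (abs_le.mp hfN).2; linarith
  have hfNL : b - d'' ≤ f N := by have := (abs_le.mp hfN).1; linarith
  set good : ℕ → ℕ → Prop := fun i j => |f i - g j| ≤ C with hgood_def
  -- the P-side running maximum
  set w : ℕ → ℝ := wSeq f a ct with hw_def
  have hwmono : Monotone w := wSeq_mono
  have hwa : ∀ i, a ≤ w i := fun i => le_wSeq i
  have hwf : ∀ i, f i - ct ≤ w i := fun i => sub_le_wSeq i
  have hwub : ∀ i, w i ≤ max a (μ i + c - ct) := by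
    intro i
    refine wSeq_le_of i (le_max_left _ _) (fun k hk => le_max_of_le_right ?_)
    have := hfU k
    have := hμ hk
    linarith
  have hwA1 : ∀ i, f i - w i ≤ ct := fun i => by have := hwf i; linarith
  have hwA2 : ∀ i, w i - f i ≤ ct := by
    intro i
    rcases max_cases a (μ i + c - ct) with ⟨h1, _⟩ | ⟨h1, _⟩ <;>
      have h2 := (hwub i).trans_eq h1
    · have := hfL i; have := hμa i; linarith
    · have := hfL i; linarith
  have hwstep : ∀ i, w (i+1) ≤ w i + e := by
    intro i
    rw [show w (i+1) = max (w i) (f (i+1) - ct) from rfl]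
    refine max_le (by linarith) ?_
    have := hwf i
    have := hfsU i
    linarith
  have hwb : ∀ i, w i ≤ b := by
    intro i
    refine (hwub i).trans (max_le hab ?_)
    have := hμb i
    linarith
  set J : ℕ → ℕ := fun i => Nat.findGreatest (fun j => g j ≤ w i) N with hJ_def
  have hJle : ∀ i, J i ≤ N := fun i => Nat.findGreatest_le (P := fun j => g j ≤ w i) N
  have hJspec : ∀ i, g (J i) ≤ w i := by
    intro i
    exact Nat.findGreatest_spec (P := fun j => g j ≤ w i) (Nat.zero_le N)
      (show g 0 ≤ w i by rw [hg0]; exact hwa i)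
  have hJgt : ∀ i j, J i < j → j ≤ N → w i < g j := by
    intro i j h1 h2
    exact not_le.mp (Nat.findGreatest_is_greatest (P := fun j => g j ≤ w i) h1 h2)
  have hJmono : ∀ i i', i ≤ i' → J i ≤ J i' := by
    intro i i' h
    exact Nat.le_findGreatest (P := fun j => g j ≤ w i') (hJle i) ((hJspec i).trans (hwmono h))
  have hJcongr : ∀ i i', w i = w i' → J i = J i' := by
    intro i i' h
    simp only [hJ_def, h]
  have hBlem : ∀ i, w i - e ≤ g (J i) := by
    intro i
    rcases eq_or_lt_of_le (hJle i) with h | h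
    · rw [h, hgN]; have := hwb i; linarith
    · have h1 := hJgt i (J i + 1) (Nat.lt_succ_self _) h
      have h2 := hgsU (J i)
      linarith
  have hM1 : ∀ i, good (i+1) (J i) := by
    intro i
    have a1 := hwA1 (i+1)
    have a2 := hwA2 (i+1)
    have s1 := hwstep i
    have b1 := hBlem i
    have b2 := hJspec i
    have m1 : w i ≤ w (i+1) := hwmono (Nat.le_succ i)
    rw [hgood_def]
    simp only
    rw [abs_le]
    constructor <;> linarith
  have hM2 : ∀ i j, J i < j → j ≤ J (i+1) → good (i+1) j := by
    intro i j h1 h2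
    have hwlt : w i < w (i+1) := by
      rcases eq_or_lt_of_le (hwmono (Nat.le_succ i)) with hh | hh
      · exact absurd (hJcongr i (i+1) hh) (by omega)
      · exact hh
    have hact : w (i+1) = f (i+1) - ct := by
      rw [show w (i+1) = max (w i) (f (i+1) - ct) from rfl] at hwlt ⊢
      rcases le_or_gt (f (i+1) - ct) (w i) with hh | hh
      · rw [max_eq_left hh] at hwlt; exact absurd hwlt (lt_irrefl _)
      · exact max_eq_right hh.le
    have hgj1 : w i < g j := hJgt i j h1 (h2.trans (hJle (i+1)))
    have hgj2 : g j ≤ w (i+1) + 2*c' := by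
      have n1 : ν j ≤ ν (J (i+1)) := hν h2
      have := hgU j
      have := hgL (J (i+1))
      have := hJspec (i+1)
      linarith
    have s1 := hwstep i
    rw [hgood_def]
    simp only
    rw [abs_le]
    constructor <;> linarith
  -- the Q-side running maximum (pre-phase)
  set v : ℕ → ℝ := wSeq g (f 0) ct with hv_def
  have hvmono : Monotone v := wSeq_mono
  have hvf0 : ∀ j, f 0 ≤ v j := fun j => le_wSeq j
  have hvg : ∀ j, g j - ct ≤ v j := fun j => sub_le_wSeq j
  have hvub : ∀ j, v j ≤ max (f 0) (ν j + c' - ct) := by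
    intro j
    refine wSeq_le_of j (le_max_left _ _) (fun k hk => le_max_of_le_right ?_)
    have := hgU k
    have := hν hk
    linarith
  have hvA1 : ∀ j, g j - v j ≤ ct := fun j => by have := hvg j; linarith
  have hvA2 : ∀ j, v j - g j ≤ ct := by
    intro j
    rcases max_cases (f 0) (ν j + c' - ct) with ⟨h1, _⟩ | ⟨h1, _⟩ <;>
      have h2 := (hvub j).trans_eq h1
    · have := hgL j; have := hνa j; linarith
    · have := hgL j; linarith
  have hvstep : ∀ j, v (j+1) ≤ v j + e := by
    intro j
    rw [show v (j+1) = max (v j) (g (j+1) - ct) from rfl]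
    refine max_le (by linarith) ?_
    have := hvg j
    have := hgsU j
    linarith
  -- first crossing index and last-zero index
  set i0 : ℕ := firstCross f (a + ct) N with hi0_def
  have hi0N : i0 ≤ N := firstCross_le_N
  have hflt : ∀ i, i < i0 → f i < a + ct := fun i hi => lt_firstCross hi
  set j0 : ℕ := Nat.findGreatest (fun j => g j ≤ a) N with hj0_def
  have hj0le : j0 ≤ N := Nat.findGreatest_le (P := fun j => g j ≤ a) N
  have hj0spec : g j0 ≤ a := by
    exact Nat.findGreatest_spec (P := fun j => g j ≤ a) (Nat.zero_le N)
      (show g 0 ≤ a by rw [hg0])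
  have hj0gt : ∀ j, j0 < j → j ≤ N → a < g j := by
    intro j h1 h2
    exact not_le.mp (Nat.findGreatest_is_greatest (P := fun j => g j ≤ a) h1 h2)
  set I : ℕ → ℕ := fun j => Nat.findGreatest (fun i => f i ≤ v j) i0 with hI_def
  have hIle : ∀ j, I j ≤ i0 := fun j => Nat.findGreatest_le (P := fun i => f i ≤ v j) i0
  have hIspec : ∀ j, f (I j) ≤ v j := by
    intro j
    exact Nat.findGreatest_spec (P := fun i => f i ≤ v j) (Nat.zero_le i0) (hvf0 j)
  have hIgt : ∀ j i, I j < i → i ≤ i0 → v j < f i := by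
    intro j i h1 h2
    exact not_le.mp (Nat.findGreatest_is_greatest (P := fun i => f i ≤ v j) h1 h2)
  have hImono : ∀ j j', j ≤ j' → I j ≤ I j' := by
    intro j j' h
    exact Nat.le_findGreatest (P := fun i => f i ≤ v j') (hIle j) ((hIspec j).trans (hvmono h))
  have hIcongr : ∀ j j', v j = v j' → I j = I j' := by
    intro j j' h
    simp only [hI_def, h]
  have hgpre : ∀ k, k ≤ j0 → g k ≤ a + 2*c' := by
    intro k hk
    have := hgU k
    have h1 : ν k ≤ ν j0 := hν hk
    have := hgL j0
    linarith [hj0spec]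
  have hvpre : ∀ j, j ≤ j0 → v j < a + ct := by
    intro j hj
    have h1 : v j ≤ max (a + d'') (a + 2*c' - ct) := by
      refine wSeq_le_of j (le_max_of_le_left hf0U) (fun k hk => le_max_of_le_right ?_)
      have := hgpre k (hk.trans hj)
      linarith
    rcases max_cases (a + d'') (a + 2*c' - ct) with ⟨h2, _⟩ | ⟨h2, _⟩ <;>
      have h3 := h1.trans_eq h2 <;> linarith
  have hP1V : ∀ j, j + 1 ≤ j0 → good (I j) (j+1) := by
    intro j hj
    have hup : f (I j) - g (j+1) ≤ ct := by
      have h1 := hIspec j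
      have h2 : v j ≤ v (j+1) := hvmono (Nat.le_succ j)
      have h3 := hvA2 (j+1)
      linarith
    have hdown : g (j+1) - f (I j) ≤ C := by
      rcases eq_or_lt_of_le (hIle j) with hh | hh
      · by_cases hex : ∃ i, i ≤ N ∧ a + ct ≤ f i
        · exfalso
          have h1 : a + ct ≤ f i0 := firstCross_spec hex
          have h2 := hIspec j
          have h3 := hvpre j (by omega)
          rw [hh] at h2
          linarith
        · have hi0 : i0 = N := firstCross_eq_N hex
          have h1 : g (j+1) ≤ ν (j+1) + c' := hgU (j+1)
          have h2 := hνb (j+1)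
          have h3 := hIspec j
          rw [hh, hi0] at h3 ⊢
          linarith
      · have h1 : v j < f (I j + 1) := hIgt j (I j + 1) (Nat.lt_succ_self _) hh
        have h2 := hfsU (I j)
        have h3 := hvA1 (j+1)
        have h4 := hvstep j
        linarith
    rw [hgood_def]
    simp only
    rw [abs_le]
    constructor <;> linarith
  have hP1H : ∀ j, j + 1 ≤ j0 → ∀ i, I j < i → i ≤ I (j+1) → good i (j+1) := by
    intro j hj i h1 h2
    have hvlt : v j < v (j+1) := by
      rcases eq_or_lt_of_le (hvmono (Nat.le_succ j)) with hh | hh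
      · exact absurd (hIcongr j (j+1) hh) (by omega)
      · exact hh
    have hact : v (j+1) = g (j+1) - ct := by
      rw [show v (j+1) = max (v j) (g (j+1) - ct) from rfl] at hvlt ⊢
      rcases le_or_gt (g (j+1) - ct) (v j) with hh | hh
      · rw [max_eq_left hh] at hvlt; exact absurd hvlt (lt_irrefl _)
      · exact max_eq_right hh.le
    have hfgt : v j < f i := hIgt j i h1 (h2.trans (hIle (j+1)))
    have hfle : f i ≤ v (j+1) + 2*c := by
      have m1 : μ i ≤ μ (I (j+1)) := hμ h2
      have := hfU i
      have := hfL (I (j+1))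
      have := hIspec (j+1)
      linarith
    have s1 := hvstep j
    rw [hgood_def]
    simp only
    rw [abs_le]
    constructor <;> linarith
  have hP1H0 : ∀ i, i ≤ I 0 → good i 0 := by
    intro i hi
    rw [hgood_def]
    simp only
    rw [hg0, abs_le]
    have hdown : a - f i ≤ C := by
      have := hfL i
      have := hμa i
      linarith
    refine ⟨by linarith, ?_⟩
    rcases eq_or_lt_of_le (hi.trans (hIle 0)) with hh | hh
    · have h1 : I 0 = i0 := le_antisymm (hIle 0) (hh ▸ hi)
      have h2 := hIspec 0
      rw [h1] at h2
      have h3 : v 0 = f 0 := by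
        rw [show v 0 = max (f 0) (g 0 - ct) from rfl, hg0, max_eq_left (by linarith)]
      have h4 : f i ≤ f 0 := by
        have h5 : i = i0 := le_antisymm (hi.trans (hIle 0)) (hh ▸ le_rfl)
        rw [h5]; rw [h3] at h2; exact h2
      linarith
    · have := hflt i hh
      linarith
  have hwpre : ∀ i, i < i0 → w i = a := by
    intro i hi
    refine wSeq_eq_floor i (fun k hk => ?_)
    have := hflt k (lt_of_le_of_lt hk hi)
    linarith
  have hsplice : j0 ≤ J (I j0) := by
    refine Nat.le_findGreatest (P := fun j => g j ≤ w (I j0)) hj0le ?_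
    exact hj0spec.trans (hwa _)
  have hS4good : ∀ jj, j0 < jj → jj ≤ J (I j0) → good (I j0) jj := by
    intro jj h1 h2
    have hga : a < g jj := hj0gt jj h1 (h2.trans (hJle _))
    have hgub : g jj ≤ w (I j0) + 2*c' := by
      have n1 : ν jj ≤ ν (J (I j0)) := hν h2
      have := hgU jj
      have := hgL (J (I j0))
      have := hJspec (I j0)
      linarith
    by_cases hwa' : w (I j0) = a
    · exfalso
      have : J (I j0) = j0 := by
        exact (congrArg (fun x => Nat.findGreatest (fun j => g j ≤ x) N) hwa').trans hj0_def.symm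
      omega
    · have hwgt : a < w (I j0) := lt_of_le_of_ne (hwa _) (Ne.symm hwa')
      have hisi0 : I j0 = i0 := by
        rcases eq_or_lt_of_le (hIle j0) with hh | hh
        · exact hh
        · exact absurd (hwpre _ hh) hwa'
      have hact : w (I j0) = f (I j0) - ct := by
        refine wSeq_active (I j0) (fun i hi => ?_) hwgt
        have := hflt i (by omega)
        linarith
      have hover : f (I j0) ≤ a + ct + e := by
        rcases Nat.eq_zero_or_pos (I j0) with hz | hpos
        · rw [hz]; linarith
        · have h3 : I j0 - 1 < i0 := by omega
          have h4 := hflt (I j0 - 1) h3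
          have h5 := hfsU (I j0 - 1)
          rw [show I j0 - 1 + 1 = I j0 by omega] at h5
          linarith
      rw [hgood_def]
      simp only
      rw [abs_le]
      constructor <;> linarith
  have hM3 : ∀ j, J N < j → j ≤ N → good N j := by
    intro j h1 h2
    have h3 := hJgt N j h1 h2
    have h4 := hwA1 N
    have h5 := hgU j
    have h6 := hνb j
    rw [hgood_def]
    simp only
    rw [abs_le]
    constructor <;> linarith
  -- assemble the staircase
  have S0 : Stair good 0 0 := by
    refine Stair.base ?_
    rw [hgood_def]
    simp only
    rw [hg0]
    refine hf0.trans (by linarith)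
  have S1 : Stair good (I 0) 0 := S0.hrun (Nat.zero_le _) (fun k _ hk' => hP1H0 k hk')
  have S2 : ∀ j, j ≤ j0 → Stair good (I j) j := by
    intro j
    induction j with
    | zero => intro _; exact S1
    | succ m ih =>
        intro hj
        have prev : Stair good (I m) m := ih (by omega)
        have up1 : Stair good (I m) (m+1) := prev.up (hP1V m hj)
        exact up1.hrun (hImono m (m+1) (Nat.le_succ m)) (fun k hk hk' => hP1H m hj k hk hk')
  have S4 : Stair good (I j0) (J (I j0)) :=
    (S2 j0 le_rfl).vrun hsplice (fun k hk hk' => hS4good k hk hk')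
  have S5 : ∀ i, I j0 ≤ i → i ≤ N → Stair good i (J i) := by
    intro i hi
    induction i , hi using Nat.le_induction with
    | base => intro _; exact S4
    | succ m hm ih =>
        intro hm1
        have prev := ih (by omega)
        have r1 : Stair good (m+1) (J m) := prev.right (hM1 m)
        exact r1.vrun (hJmono m (m+1) (Nat.le_succ m)) (fun k hk hk' => hM2 m k hk hk')
  exact (S5 N ((hIle j0).trans hi0N) le_rfl).vrun (hJle N) (fun k hk hk' => hM3 k hk hk')



/-- squash `[0,1/2]` onto `[0,1]`. -/
def sh (t : unitInterval) : unitInterval :=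
  ⟨min (2*(t:ℝ)) 1, Set.mem_Icc.mpr ⟨le_min (by have := t.2.1; linarith) zero_le_one, min_le_right _ _⟩⟩

/-- squash `[1/2,1]` onto `[0,1]`. -/
def sh2 (t : unitInterval) : unitInterval :=
  ⟨max (2*(t:ℝ) - 1) 0, Set.mem_Icc.mpr ⟨le_max_right _ _,
    max_le (by have := t.2.2; linarith) zero_le_one⟩⟩

lemma sh_cont : Continuous sh :=
  Continuous.subtype_mk ((continuous_const.mul continuous_subtype_val).min continuous_const) _

lemma sh2_cont : Continuous sh2 :=
  Continuous.subtype_mk (((continuous_const.mul continuous_subtype_val).sub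
    continuous_const).max continuous_const) _

lemma sh_mono : Monotone sh := by
  intro t1 t2 h
  exact Subtype.mk_le_mk.mpr (min_le_min (by have : (t1:ℝ) ≤ t2 := h; linarith) le_rfl)

lemma sh2_mono : Monotone sh2 := by
  intro t1 t2 h
  exact Subtype.mk_le_mk.mpr (max_le_max (by have : (t1:ℝ) ≤ t2 := h; linarith) le_rfl)

lemma sh_zero : sh 0 = 0 := by
  apply Subtype.ext
  show min (2*((0:unitInterval):ℝ)) 1 = 0
  norm_num

lemma sh_of_half {t : unitInterval} (ht : (t:ℝ) = 1/2) : sh t = 1 := by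
  apply Subtype.ext
  show min (2*(t:ℝ)) 1 = 1
  rw [ht]; norm_num

lemma sh2_of_half {t : unitInterval} (ht : (t:ℝ) = 1/2) : sh2 t = 0 := by
  apply Subtype.ext
  show max (2*(t:ℝ) - 1) 0 = 0
  rw [ht]; norm_num

lemma sh2_one : sh2 1 = 1 := by
  apply Subtype.ext
  show max (2*((1:unitInterval):ℝ) - 1) 0 = 1
  norm_num

/-- linear segment between two points of the unit interval. -/
def seg (x y : unitInterval) (u : unitInterval) : unitInterval :=
  ⟨(1 - (u:ℝ))*(x:ℝ) + (u:ℝ)*(y:ℝ), Set.mem_Icc.mpr ⟨by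
    have h1 : (0:ℝ) ≤ (1 - (u:ℝ))*(x:ℝ) := mul_nonneg (by have := u.2.2; linarith) x.2.1
    have h2 : (0:ℝ) ≤ (u:ℝ)*(y:ℝ) := mul_nonneg u.2.1 y.2.1
    linarith, by
    have h1 : (1 - (u:ℝ))*(x:ℝ) ≤ (1 - (u:ℝ))*1 :=
      mul_le_mul_of_nonneg_left x.2.2 (by have := u.2.2; linarith)
    have h2 : (u:ℝ)*(y:ℝ) ≤ (u:ℝ)*1 := mul_le_mul_of_nonneg_left y.2.2 u.2.1
    linarith⟩⟩

lemma seg_cont {x y : unitInterval} : Continuous (seg x y) :=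
  Continuous.subtype_mk (((continuous_const.sub continuous_subtype_val).mul continuous_const).add
    (continuous_subtype_val.mul continuous_const)) _

lemma seg_zero {x y : unitInterval} : seg x y 0 = x := by
  apply Subtype.ext
  show (1 - ((0:unitInterval):ℝ))*(x:ℝ) + ((0:unitInterval):ℝ)*(y:ℝ) = x
  norm_num

lemma seg_one {x y : unitInterval} : seg x y 1 = y := by
  apply Subtype.ext
  show (1 - ((1:unitInterval):ℝ))*(x:ℝ) + ((1:unitInterval):ℝ)*(y:ℝ) = y
  norm_num

lemma seg_mono {x y : unitInterval} (hxy : x ≤ y) : Monotone (seg x y) := by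
  intro u1 u2 h
  have h' : (u1:ℝ) ≤ u2 := h
  have hxy' : (x:ℝ) ≤ y := hxy
  apply Subtype.mk_le_mk.mpr
  nlinarith [u1.2.1, u2.2.2]

lemma seg_le {x y : unitInterval} (hxy : x ≤ y) (u : unitInterval) :
    x ≤ seg x y u ∧ seg x y u ≤ y := by
  have hxy' : (x:ℝ) ≤ y := hxy
  constructor <;> apply Subtype.mk_le_mk.mpr
  · show (x:ℝ) ≤ _
    nlinarith [u.2.1, u.2.2]
  · show _ ≤ (y:ℝ)
    nlinarith [u.2.1, u.2.2]

lemma seg_self {x : unitInterval} (u : unitInterval) : seg x x u = x := by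
  apply Subtype.ext
  show (1 - (u:ℝ))*(x:ℝ) + (u:ℝ)*(x:ℝ) = x
  ring

/-- concatenation of two unit-interval reparametrizations. -/
noncomputable def glue (F S : unitInterval → unitInterval) : unitInterval → unitInterval :=
  fun t => if (t:ℝ) ≤ 1/2 then F (sh t) else S (sh2 t)

lemma glue_cont {F S : unitInterval → unitInterval} (hF : Continuous F) (hS : Continuous S)
    (hFS : F 1 = S 0) : Continuous (glue F S) := by
  refine Continuous.if_le (hF.comp sh_cont) (hS.comp sh2_cont) continuous_subtype_val
    continuous_const ?_
  intro t ht
  rw [sh_of_half ht, sh2_of_half ht, hFS]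

lemma glue_mono {F S : unitInterval → unitInterval} (hF : Monotone F) (hS : Monotone S)
    (hFS : F 1 = S 0) : Monotone (glue F S) := by
  intro t1 t2 h
  have h' : (t1:ℝ) ≤ t2 := h
  unfold glue
  split_ifs with h1 h2 h2
  · exact hF (sh_mono h)
  · calc F (sh t1) ≤ F 1 := hF (by exact Subtype.mk_le_mk.mpr (sh t1).2.2)
    _ = S 0 := hFS
    _ ≤ S (sh2 t2) := hS (Subtype.mk_le_mk.mpr (sh2 t2).2.1)
  · exact absurd (h'.trans h2) h1
  · exact hS (sh2_mono h)

lemma glue_zero {F S : unitInterval → unitInterval} : glue F S 0 = F 0 := by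
  unfold glue
  rw [if_pos (by norm_num : ((0:unitInterval):ℝ) ≤ 1/2), sh_zero]

lemma glue_one {F S : unitInterval → unitInterval} : glue F S 1 = S 1 := by
  unfold glue
  rw [if_neg (by norm_num : ¬((1:unitInterval):ℝ) ≤ 1/2), sh2_one]

theorem stair_to_matching (P Q : unitInterval → ℝ) (cl : ℕ → unitInterval)
    (hclm : Monotone cl) (hcl0 : cl 0 = 0) (C e : ℝ) (he : 0 ≤ e)
    (hPv : ∀ i (t : unitInterval), cl i ≤ t → t ≤ cl (i+1) → dist (P t) (P (cl i)) ≤ e)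
    (hQv : ∀ j (t : unitInterval), cl j ≤ t → t ≤ cl (j+1) → dist (Q t) (Q (cl j)) ≤ e)
    {i j : ℕ} (h : Stair (fun i j => dist (P (cl i)) (Q (cl j)) ≤ C) i j) :
    ∃ F G : unitInterval → unitInterval, Continuous F ∧ Monotone F ∧ F 0 = 0 ∧ F 1 = cl i ∧
      Continuous G ∧ Monotone G ∧ G 0 = 0 ∧ G 1 = cl j ∧
      ∀ t, dist (P (F t)) (Q (G t)) ≤ C + e := by
  induction h with
  | base hb =>
      refine ⟨fun _ => 0, fun _ => 0, continuous_const, monotone_const, rfl, hcl0.symm,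
        continuous_const, monotone_const, rfl, hcl0.symm, fun t => ?_⟩
      rw [← hcl0] at *
      exact hb.trans (by linarith)
  | @right i j hprev hgood ih =>
      obtain ⟨F, G, hFc, hFm, hF0, hF1, hGc, hGm, hG0, hG1, hcost⟩ := ih
      have hij : dist (P (cl i)) (Q (cl j)) ≤ C := hprev.last
      have hii : cl i ≤ cl (i+1) := hclm (Nat.le_succ i)
      refine ⟨glue F (seg (cl i) (cl (i+1))), glue G (seg (cl j) (cl j)), ?_, ?_, ?_, ?_, ?_, ?_, ?_, ?_, ?_⟩
      · exact glue_cont hFc seg_cont (by rw [hF1, seg_zero])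
      · exact glue_mono hFm (seg_mono hii) (by rw [hF1, seg_zero])
      · rw [glue_zero, hF0]
      · rw [glue_one, seg_one]
      · exact glue_cont hGc seg_cont (by rw [hG1, seg_zero])
      · exact glue_mono hGm (seg_mono le_rfl) (by rw [hG1, seg_zero])
      · rw [glue_zero, hG0]
      · rw [glue_one, seg_self]
      · intro t
        unfold glue
        split_ifs with ht
        · exact hcost (sh t)
        · rw [seg_self]
          calc dist (P (seg (cl i) (cl (i+1)) (sh2 t))) (Q (cl j))
              ≤ dist (P (seg (cl i) (cl (i+1)) (sh2 t))) (P (cl i)) + dist (P (cl i)) (Q (cl j)) :=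
                dist_triangle _ _ _
            _ ≤ e + C := add_le_add (hPv i _ (seg_le hii _).1 (seg_le hii _).2) hij
            _ = C + e := by ring
  | @up i j hprev hgood ih =>
      obtain ⟨F, G, hFc, hFm, hF0, hF1, hGc, hGm, hG0, hG1, hcost⟩ := ih
      have hij : dist (P (cl i)) (Q (cl j)) ≤ C := hprev.last
      have hjj : cl j ≤ cl (j+1) := hclm (Nat.le_succ j)
      refine ⟨glue F (seg (cl i) (cl i)), glue G (seg (cl j) (cl (j+1))), ?_, ?_, ?_, ?_, ?_, ?_, ?_, ?_, ?_⟩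
      · exact glue_cont hFc seg_cont (by rw [hF1, seg_zero])
      · exact glue_mono hFm (seg_mono le_rfl) (by rw [hF1, seg_zero])
      · rw [glue_zero, hF0]
      · rw [glue_one, seg_self]
      · exact glue_cont hGc seg_cont (by rw [hG1, seg_zero])
      · exact glue_mono hGm (seg_mono hjj) (by rw [hG1, seg_zero])
      · rw [glue_zero, hG0]
      · rw [glue_one, seg_one]
      · intro t
        unfold glue
        split_ifs with ht
        · exact hcost (sh t)
        · rw [seg_self]
          calc dist (P (cl i)) (Q (seg (cl j) (cl (j+1)) (sh2 t)))
              ≤ dist (P (cl i)) (Q (cl j)) + dist (Q (cl j)) (Q (seg (cl j) (cl (j+1)) (sh2 t))) :=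
                dist_triangle _ _ _
            _ ≤ C + e := add_le_add hij (by
                rw [dist_comm]
                exact hQv j _ (seg_le hjj _).1 (seg_le hjj _).2)


theorem stair_imp {g1 g2 : ℕ → ℕ → Prop} (h : ∀ i j, g1 i j → g2 i j) {i j : ℕ}
    (hs : Stair g1 i j) : Stair g2 i j := by
  induction hs with
  | base hb => exact Stair.base (h _ _ hb)
  | right _ hg ih => exact Stair.right ih (h _ _ hg)
  | up _ hg ih => exact Stair.up ih (h _ _ hg)

theorem surj_of_mono_cont (F : unitInterval → unitInterval) (hc : Continuous F)
    (h0 : F 0 = 0) (h1 : F 1 = 1) : Function.Surjective F := by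
  intro y
  have hco : ContinuousOn (fun s : ℝ => (F (Set.projIcc 0 1 zero_le_one s) : ℝ)) (Set.Icc 0 1) :=
    (continuous_subtype_val.comp (hc.comp continuous_projIcc)).continuousOn
  have h0' : (fun s : ℝ => (F (Set.projIcc 0 1 zero_le_one s) : ℝ)) 0 = 0 := by
    simp only [Set.projIcc_left]
    rw [show (⟨0, Set.left_mem_Icc.mpr zero_le_one⟩ : unitInterval) = 0 from rfl, h0]
    rfl
  have h1' : (fun s : ℝ => (F (Set.projIcc 0 1 zero_le_one s) : ℝ)) 1 = 1 := by
    simp only [Set.projIcc_right]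
    rw [show (⟨1, Set.right_mem_Icc.mpr zero_le_one⟩ : unitInterval) = 1 from rfl, h1]
    rfl
  have hy : (y:ℝ) ∈ Set.Icc ((fun s : ℝ => (F (Set.projIcc 0 1 zero_le_one s) : ℝ)) 0)
      ((fun s : ℝ => (F (Set.projIcc 0 1 zero_le_one s) : ℝ)) 1) := by
    rw [h0', h1']
    exact y.2
  obtain ⟨x, hx, hfx⟩ := intermediate_value_Icc zero_le_one hco hy
  exact ⟨Set.projIcc 0 1 zero_le_one x, Subtype.ext hfx⟩

end SegProxy

/-- Segment-proxy lemma for signature edges, endpoint case (i). -/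
theorem frechetDist_le_signatureEdge_endpoints (δ δ' δ'' : ℝ)
    (hδ' : 0 ≤ δ') (hδ'' : 0 ≤ δ'') (hsum : δ = δ' + δ'')
    (a b : ℝ) (hab : a ≤ b)
    (Q : unitInterval → ℝ) (hQc : Continuous Q) (hQ0 : Q 0 = a) (hQ1 : Q 1 = b)
    (hQX : frechetDist Q (segCurve a b) ≤ δ')
    (P : unitInterval → ℝ) (hPc : Continuous P)
    (hPX : frechetDist P (segCurve a b) ≤ δ)
    (h0 : |Q 0 - P 0| ≤ δ'') (h1 : |Q 1 - P 1| ≤ δ'') :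
    frechetDist P Q ≤ δ := by
  classical
  have hδ : 0 ≤ δ := by linarith
  refine le_of_forall_pos_le_add ?_
  intro ε hε
  set X : unitInterval → ℝ := segCurve a b with hX_def
  have hXc : Continuous X := by
    rw [hX_def]; unfold segCurve
    exact ((continuous_const.sub continuous_subtype_val).smul continuous_const).add
      (continuous_subtype_val.smul continuous_const)
  set e : ℝ := ε/6 with he_def
  have he : 0 < e := by positivity
  -- nonemptiness of matching sets
  have hne : ∀ (A B : unitInterval → ℝ), Continuous A → Continuous B →
      Set.Nonempty {r : ℝ | ∃ f g : unitInterval → unitInterval,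
        Continuous f ∧ Monotone f ∧ Function.Surjective f ∧
        Continuous g ∧ Monotone g ∧ Function.Surjective g ∧
        ∀ t, dist (A (f t)) (B (g t)) ≤ r} := by
    intro A B hA hB
    obtain ⟨t0, -, ht0⟩ := isCompact_univ.exists_isMaxOn Set.univ_nonempty
      ((hA.dist hB).continuousOn)
    exact ⟨dist (A t0) (B t0), id, id, continuous_id, monotone_id, Function.surjective_id,
      continuous_id, monotone_id, Function.surjective_id, fun t => ht0 (Set.mem_univ t)⟩
  -- extract near-optimal matchings
  have hPX' : frechetDist P X < δ + e := lt_of_le_of_lt hPX (by linarith)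
  obtain ⟨rP, hrPmem, hrPlt⟩ := exists_lt_of_csInf_lt (hne P X hPc hXc) hPX'
  obtain ⟨p, xp, hpc, hpm, hps, hxpc, hxpm, hxps, hpb⟩ := hrPmem
  have hpb' : ∀ t, |P (p t) - X (xp t)| ≤ δ + e := by
    intro t
    rw [← Real.dist_eq]
    exact (hpb t).trans hrPlt.le
  have hQX' : frechetDist Q X < δ' + e := lt_of_le_of_lt hQX (by linarith)
  obtain ⟨rQ, hrQmem, hrQlt⟩ := exists_lt_of_csInf_lt (hne Q X hQc hXc) hQX'
  obtain ⟨q, yq, hqc, hqm, hqs, hyqc, hyqm, hyqs, hqb⟩ := hrQmem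
  have hqb' : ∀ t, |Q (q t) - X (yq t)| ≤ δ' + e := by
    intro t
    rw [← Real.dist_eq]
    exact (hqb t).trans hrQlt.le
  -- uniform continuity moduli
  obtain ⟨ηP, hηP, hPmod⟩ :=
    Metric.uniformContinuous_iff.mp (CompactSpace.uniformContinuous_of_continuous hPc) e he
  obtain ⟨ηQ, hηQ, hQmod⟩ :=
    Metric.uniformContinuous_iff.mp (CompactSpace.uniformContinuous_of_continuous hQc) e he
  have hmin : 0 < min ηP ηQ := lt_min hηP hηQ
  obtain ⟨N, hN⟩ := exists_nat_gt (1/(min ηP ηQ))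
  have hNpos : 0 < (N:ℝ) := lt_trans (by positivity) hN
  have hNstep : 1/(N:ℝ) < min ηP ηQ := by
    rw [div_lt_iff₀ hNpos]
    rw [div_lt_iff₀ hmin] at hN
    nlinarith
  -- the grid
  set cl : ℕ → unitInterval := fun k => ⟨((min k N : ℕ):ℝ)/(N:ℝ), Set.mem_Icc.mpr ⟨by positivity,
    by rw [div_le_one hNpos]; exact_mod_cast min_le_right k N⟩⟩ with hcl_def
  have hclm : Monotone cl := by
    intro k k' hk
    apply Subtype.mk_le_mk.mpr
    rw [div_le_div_iff_of_pos_right hNpos]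
    exact_mod_cast min_le_min hk le_rfl
  have hcl0 : cl 0 = 0 := Subtype.ext (by show ((min 0 N:ℕ):ℝ)/N = 0; simp)
  have hclN : cl N = 1 := Subtype.ext (by
    show ((min N N:ℕ):ℝ)/N = 1
    rw [min_self]
    exact div_self (ne_of_gt hNpos))
  have hcldiff : ∀ k, dist (cl (k+1)) (cl k) < min ηP ηQ := by
    intro k
    rw [Subtype.dist_eq, Real.dist_eq]
    have hmle : ((min k N:ℕ):ℝ) ≤ ((min (k+1) N:ℕ):ℝ) := by
      exact_mod_cast min_le_min (Nat.le_succ k) (le_refl N)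
    have hmle2 : ((min (k+1) N:ℕ):ℝ) ≤ ((min k N:ℕ):ℝ) + 1 := by
      have : (min (k+1) N:ℕ) ≤ min k N + 1 := by omega
      exact_mod_cast this
    show |((min (k+1) N:ℕ):ℝ)/N - ((min k N:ℕ):ℝ)/N| < min ηP ηQ
    rw [div_sub_div_same, abs_of_nonneg (div_nonneg (by linarith) hNpos.le)]
    refine lt_of_le_of_lt ?_ hNstep
    rw [div_le_div_iff_of_pos_right hNpos]
    linarith
  -- local variation bounds
  have hPv : ∀ k (t : unitInterval), cl k ≤ t → t ≤ cl (k+1) → dist (P t) (P (cl k)) ≤ e := by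
    intro k t hta htb
    refine (hPmod ?_).le
    have h1' : (cl k:ℝ) ≤ t := hta
    have h2' : (t:ℝ) ≤ cl (k+1) := htb
    have hd : dist t (cl k) ≤ dist (cl (k+1)) (cl k) := by
      rw [Subtype.dist_eq, Real.dist_eq, Subtype.dist_eq, Real.dist_eq]
      rw [abs_of_nonneg (by linarith), abs_of_nonneg (by linarith)]
      linarith
    exact lt_of_le_of_lt hd (lt_of_lt_of_le (hcldiff k) (min_le_left _ _))
  have hQv : ∀ k (t : unitInterval), cl k ≤ t → t ≤ cl (k+1) → dist (Q t) (Q (cl k)) ≤ e := by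
    intro k t hta htb
    refine (hQmod ?_).le
    have h1' : (cl k:ℝ) ≤ t := hta
    have h2' : (t:ℝ) ≤ cl (k+1) := htb
    have hd : dist t (cl k) ≤ dist (cl (k+1)) (cl k) := by
      rw [Subtype.dist_eq, Real.dist_eq, Subtype.dist_eq, Real.dist_eq]
      rw [abs_of_nonneg (by linarith), abs_of_nonneg (by linarith)]
      linarith
    exact lt_of_le_of_lt hd (lt_of_lt_of_le (hcldiff k) (min_le_right _ _))
  -- discrete data
  set f : ℕ → ℝ := fun k => P (cl k) with hf_def
  set g : ℕ → ℝ := fun k => Q (cl k) with hg_def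
  set tP : ℕ → unitInterval := fun m => (hps (cl m)).choose with htP_def
  have htP : ∀ m, p (tP m) = cl m := fun m => (hps (cl m)).choose_spec
  set tQ : ℕ → unitInterval := fun m => (hqs (cl m)).choose with htQ_def
  have htQ : ∀ m, q (tQ m) = cl m := fun m => (hqs (cl m)).choose_spec
  set μ : ℕ → ℝ := fun k => X (xp (tP (min k N))) with hμ_def
  set ν : ℕ → ℝ := fun k => X (yq (tQ (min k N))) with hν_def
  have hXval : ∀ u : unitInterval, X u = (1 - (u:ℝ))*a + (u:ℝ)*b := by
    intro u
    rw [hX_def]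
    unfold segCurve
    rw [smul_eq_mul, smul_eq_mul]
  have hXa : ∀ u, a ≤ X u := by
    intro u
    rw [hXval]
    nlinarith [u.2.1, u.2.2]
  have hXb : ∀ u, X u ≤ b := by
    intro u
    rw [hXval]
    nlinarith [u.2.1, u.2.2]
  have hXmono : ∀ u u' : unitInterval, u ≤ u' → X u ≤ X u' := by
    intro u u' hu
    have hu' : (u:ℝ) ≤ u' := hu
    rw [hXval, hXval]
    nlinarith
  have hclstrict : ∀ m m', m < m' → m' ≤ N → (cl m : ℝ) < cl m' := by
    intro m m' hmm' hm'N
    show ((min m N:ℕ):ℝ)/N < ((min m' N:ℕ):ℝ)/N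
    have hmin' : min m N < min m' N := by omega
    rw [div_lt_div_iff_of_pos_right hNpos]
    exact_mod_cast hmin'
  have htPmono : ∀ m m', m ≤ m' → m' ≤ N → tP m ≤ tP m' := by
    intro m m' hmm' hm'N
    rcases eq_or_lt_of_le hmm' with rfl | hlt
    · exact le_rfl
    · by_contra hc0
      push_neg at hc0
      have hmono := hpm hc0.le
      rw [htP, htP] at hmono
      have hle : (cl m' : ℝ) ≤ cl m := hmono
      exact absurd hle (not_le.mpr (hclstrict m m' hlt hm'N))
  have htQmono : ∀ m m', m ≤ m' → m' ≤ N → tQ m ≤ tQ m' := by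
    intro m m' hmm' hm'N
    rcases eq_or_lt_of_le hmm' with rfl | hlt
    · exact le_rfl
    · by_contra hc0
      push_neg at hc0
      have hmono := hqm hc0.le
      rw [htQ, htQ] at hmono
      have hle : (cl m' : ℝ) ≤ cl m := hmono
      exact absurd hle (not_le.mpr (hclstrict m m' hlt hm'N))
  have hμmono : Monotone μ := by
    intro k k' hk
    exact hXmono _ _ (hxpm (htPmono _ _ (min_le_min hk le_rfl) (min_le_right _ _)))
  have hνmono : Monotone ν := by
    intro k k' hk
    exact hXmono _ _ (hyqm (htQmono _ _ (min_le_min hk le_rfl) (min_le_right _ _)))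
  have hclmin : ∀ k, cl (min k N) = cl k := by
    intro k
    apply Subtype.ext
    show ((min (min k N) N:ℕ):ℝ)/N = ((min k N:ℕ):ℝ)/N
    congr 2
    omega
  have hfμ : ∀ k, |f k - μ k| ≤ δ + e := by
    intro k
    have hh := hpb' (tP (min k N))
    rw [htP, hclmin] at hh
    exact hh
  have hgν : ∀ k, |g k - ν k| ≤ δ' + e := by
    intro k
    have hh := hqb' (tQ (min k N))
    rw [htQ, hclmin] at hh
    exact hh
  have hfstep : ∀ k, |f (k+1) - f k| ≤ e := by
    intro k
    have hh := hPmod (lt_of_lt_of_le (hcldiff k) (min_le_left _ _))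
    rw [Real.dist_eq] at hh
    exact hh.le
  have hgstep : ∀ k, |g (k+1) - g k| ≤ e := by
    intro k
    have hh := hQmod (lt_of_lt_of_le (hcldiff k) (min_le_right _ _))
    rw [Real.dist_eq] at hh
    exact hh.le
  have hg0' : g 0 = a := by
    show Q (cl 0) = a
    rw [hcl0, hQ0]
  have hgN' : g N = b := by
    show Q (cl N) = b
    rw [hclN, hQ1]
  have hf0' : |f 0 - a| ≤ δ'' := by
    show |P (cl 0) - a| ≤ δ''
    rw [hcl0, ← hQ0, abs_sub_comm]
    exact h0
  have hfN' : |f N - b| ≤ δ'' := by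
    show |P (cl N) - b| ≤ δ''
    rw [hclN, ← hQ1, abs_sub_comm]
    exact h1
  -- run the core construction
  have hcore := SegProxy.core N f g μ ν a b (δ' + e) δ'' e (δ + e) (δ + e + 2*e) (δ + e + 4*e)
    hab (by linarith) hδ'' he (by rw [hsum]; ring) (by ring) (by ring)
    hμmono hνmono (fun i => hXa _) (fun i => hXb _) (fun j => hXa _) (fun j => hXb _)
    hfμ hgν hfstep hgstep hg0' hgN' hf0' hfN'
  have hstair : SegProxy.Stair (fun i j => dist (P (cl i)) (Q (cl j)) ≤ δ + e + 4*e) N N := by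
    refine SegProxy.stair_imp (fun i j hh => ?_) hcore
    rw [Real.dist_eq]
    exact hh
  obtain ⟨F, G, hFc, hFm, hF0, hF1, hGc, hGm, hG0, hG1, hcost⟩ :=
    SegProxy.stair_to_matching P Q cl hclm hcl0 (δ + e + 4*e) e he.le hPv hQv hstair
  rw [hclN] at hF1 hG1
  have hFs : Function.Surjective F := SegProxy.surj_of_mono_cont F hFc hF0 hF1
  have hGs : Function.Surjective G := SegProxy.surj_of_mono_cont G hGc hG0 hG1
  have hbdd : BddBelow {r : ℝ | ∃ f g : unitInterval → unitInterval,
      Continuous f ∧ Monotone f ∧ Function.Surjective f ∧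
      Continuous g ∧ Monotone g ∧ Function.Surjective g ∧
      ∀ t, dist (P (f t)) (Q (g t)) ≤ r} := by
    refine ⟨0, fun r hr => ?_⟩
    obtain ⟨f1, g1, _, _, _, _, _, _, hb⟩ := hr
    exact le_trans dist_nonneg (hb 0)
  have hmem : (δ + e + 4*e + e) ∈ {r : ℝ | ∃ f g : unitInterval → unitInterval,
      Continuous f ∧ Monotone f ∧ Function.Surjective f ∧
      Continuous g ∧ Monotone g ∧ Function.Surjective g ∧
      ∀ t, dist (P (f t)) (Q (g t)) ≤ r} :=
    ⟨F, G, hFc, hFm, hFs, hGc, hGm, hGs, hcost⟩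
  calc frechetDist P Q ≤ δ + e + 4*e + e := csInf_le hbdd hmem
    _ = δ + ε := by rw [he_def]; ring
end

section
/- Let δ = δ' + δ'' with δ, δ', δ'' ≥ 0. Let a ≤ b in R, X the segment from a to b, Q : [0,1] → R a curve with Q(0) = a, Q(1) = b and d_F(Q, X) ≤ δ', and P : [0,1] → R a curve with d_F(P, X) ≤ δ. If |Q(0) − P(0)| ≤ δ'' and max_{t ∈ [0,1]} Q(t) ≤ Q(1), then d_F(P, Q) ≤ δ. -/
open Set

section RunSup
variable (f : ℝ → ℝ)

/-- running sup of `f` over `[0, max u 0]`. -/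
noncomputable def runSup (u : ℝ) : ℝ := sSup (f '' Icc 0 (max u 0))

/-- running inf of `f` over `[min s 1, 1]`. -/
noncomputable def runInf (s : ℝ) : ℝ := sInf (f '' Icc (min s 1) 1)

variable {f}

lemma runSup_img_nonempty (u : ℝ) : (f '' Icc 0 (max u 0)).Nonempty :=
  (nonempty_Icc.2 (le_max_right u 0)).image f

lemma runSup_img_bdd (hf : Continuous f) (u : ℝ) : BddAbove (f '' Icc 0 (max u 0)) :=
  (isCompact_Icc.image hf).bddAbove

lemma runInf_img_nonempty (s : ℝ) : (f '' Icc (min s 1) 1).Nonempty :=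
  (nonempty_Icc.2 (min_le_right s 1)).image f

lemma runInf_img_bdd (hf : Continuous f) (s : ℝ) : BddBelow (f '' Icc (min s 1) 1) :=
  (isCompact_Icc.image hf).bddBelow

lemma runSup_mono (hf : Continuous f) : Monotone (runSup f) := by
  intro u u' h
  exact csSup_le_csSup (runSup_img_bdd hf u') (runSup_img_nonempty u)
    (image_mono (f := f) (Icc_subset_Icc le_rfl (max_le_max h le_rfl)))

lemma runInf_mono (hf : Continuous f) : Monotone (runInf f) := by
  intro s s' h
  exact csInf_le_csInf (runInf_img_bdd hf s) (runInf_img_nonempty s')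
    (image_mono (f := f) (Icc_subset_Icc (min_le_min h le_rfl) le_rfl))

lemma le_runSup (hf : Continuous f) {w u : ℝ} (h0 : 0 ≤ w) (h1 : w ≤ max u 0) :
    f w ≤ runSup f u :=
  le_csSup (runSup_img_bdd hf u) ⟨w, ⟨h0, h1⟩, rfl⟩

lemma runSup_le {u C : ℝ} (h : ∀ w, 0 ≤ w → w ≤ max u 0 → f w ≤ C) :
    runSup f u ≤ C :=
  csSup_le (runSup_img_nonempty u) (by rintro _ ⟨w, ⟨hw0, hw1⟩, rfl⟩; exact h w hw0 hw1)

lemma runInf_le (hf : Continuous f) {w s : ℝ} (h0 : s ≤ w) (h1 : w ≤ 1) :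
    runInf f s ≤ f w :=
  csInf_le (runInf_img_bdd hf s) ⟨w, ⟨le_trans (min_le_left s 1) h0, h1⟩, rfl⟩

lemma le_runInf {s C : ℝ} (h : ∀ w, min s 1 ≤ w → w ≤ 1 → C ≤ f w) :
    C ≤ runInf f s :=
  le_csInf (runInf_img_nonempty s) (by rintro _ ⟨w, ⟨hw0, hw1⟩, rfl⟩; exact h w hw0 hw1)

lemma runSup_attain (hf : Continuous f) (u : ℝ) :
    ∃ z, 0 ≤ z ∧ z ≤ max u 0 ∧ runSup f u = f z := by
  obtain ⟨z, hz, hmax⟩ := isCompact_Icc.exists_isMaxOn (nonempty_Icc.2 (le_max_right u 0))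
    hf.continuousOn
  refine ⟨z, hz.1, hz.2, le_antisymm (runSup_le fun w hw0 hw1 => hmax ⟨hw0, hw1⟩) ?_⟩
  exact le_csSup (runSup_img_bdd hf u) ⟨z, hz, rfl⟩

lemma runInf_attain (hf : Continuous f) (s : ℝ) :
    ∃ z, min s 1 ≤ z ∧ z ≤ 1 ∧ runInf f s = f z := by
  obtain ⟨z, hz, hmin⟩ := isCompact_Icc.exists_isMinOn (nonempty_Icc.2 (min_le_right s 1))
    hf.continuousOn
  refine ⟨z, hz.1, hz.2, le_antisymm ?_ (le_runInf fun w hw0 hw1 => hmin ⟨hw0, hw1⟩)⟩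
  exact csInf_le (runInf_img_bdd hf s) ⟨z, hz, rfl⟩

lemma runSup_zero : runSup f 0 = f 0 := by
  simp [runSup]

lemma runSup_split (hf : Continuous f) {v v' : ℝ} (h0 : 0 ≤ v) (h : v ≤ v') :
    sSup (f '' Icc 0 v') = max (sSup (f '' Icc 0 v)) (sSup (f '' Icc v v')) := by
  rw [← Icc_union_Icc_eq_Icc h0 h, image_union]
  exact csSup_union ((isCompact_Icc.image hf).bddAbove) ((nonempty_Icc.2 h0).image f)
    ((isCompact_Icc.image hf).bddAbove) ((nonempty_Icc.2 h).image f)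

lemma runSup_cont (hf : Continuous f) : Continuous (runSup f) := by
  rw [Metric.continuous_iff]
  intro u ε hε
  set v := max u 0 with hv
  obtain ⟨κ, hκ0, hκ⟩ := Metric.continuous_iff.1 hf v (ε/4) (by linarith)
  refine ⟨κ, hκ0, fun u' hu' => ?_⟩
  set v' := max u' 0 with hv'
  have hvv : |v' - v| ≤ dist u' u := by
    rw [Real.dist_eq]
    have := abs_max_sub_max_le_abs u' u 0
    simpa using this
  have key : ∀ w, w ∈ Icc (min v v') (max v v') → |f w - f v| ≤ ε/4 := by
    intro w hw
    have : dist w v < κ := by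
      rw [Real.dist_eq]
      rcases le_total v v' with hc | hc
      · have : w ∈ Icc v v' := by simpa [min_eq_left hc, max_eq_right hc] using hw
        have h1 : |w - v| ≤ |v' - v| := by
          rw [abs_of_nonneg (by linarith [this.1]), abs_of_nonneg (by linarith)]
          linarith [this.2]
        exact lt_of_le_of_lt (h1.trans hvv) hu'
      · have : w ∈ Icc v' v := by simpa [min_eq_right hc, max_eq_left hc] using hw
        have h1 : |w - v| ≤ |v' - v| := by
          rw [abs_of_nonpos (by linarith [this.2]), abs_of_nonpos (by linarith)]
          linarith [this.1]
        exact lt_of_le_of_lt (h1.trans hvv) hu'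
    have := hκ w this
    rw [Real.dist_eq] at this
    exact this.le
  have hfv' : |f v' - f v| ≤ ε/4 := key v' ⟨min_le_right _ _, le_max_right _ _⟩
  rw [Real.dist_eq]
  rcases le_total u u' with hc | hc
  · -- v ≤ v'
    have hvle : v ≤ v' := max_le_max hc le_rfl
    have hsplit := runSup_split hf (le_max_right u 0) hvle
    have hS : sSup (f '' Icc v v') ≤ f v + ε/4 := by
      refine csSup_le ((nonempty_Icc.2 hvle).image f) ?_
      rintro _ ⟨w, hw, rfl⟩
      have := key w (by simpa [min_eq_left hvle, max_eq_right hvle] using hw)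
      have := abs_le.1 this
      linarith [this.1, this.2]
    have hfvle : f v ≤ runSup f u := le_runSup hf (le_max_right u 0) le_rfl
    have hle : runSup f u' ≤ runSup f u + ε/4 := by
      have : runSup f u' = max (runSup f u) (sSup (f '' Icc v v')) := hsplit
      rw [this]
      exact max_le (by linarith) (by linarith)
    have hge : runSup f u ≤ runSup f u' := runSup_mono hf hc
    rw [abs_sub_lt_iff]; constructor <;> linarith
  · -- v' ≤ v
    have hvle : v' ≤ v := max_le_max hc le_rfl
    have hsplit := runSup_split hf (le_max_right u' 0) hvle
    have hS : sSup (f '' Icc v' v) ≤ f v + ε/4 := by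
      refine csSup_le ((nonempty_Icc.2 hvle).image f) ?_
      rintro _ ⟨w, hw, rfl⟩
      have := key w (by simpa [min_eq_right hvle, max_eq_left hvle] using hw)
      have := abs_le.1 this
      linarith [this.1, this.2]
    have hfvle : f v' ≤ runSup f u' := le_runSup hf (le_max_right u' 0) le_rfl
    have h2 : f v ≤ f v' + ε/4 := by
      have := abs_le.1 hfv'; linarith [this.1]
    have hle : runSup f u ≤ runSup f u' + ε/2 := by
      have : runSup f u = max (runSup f u') (sSup (f '' Icc v' v)) := hsplit
      rw [this]
      exact max_le (by linarith) (by linarith)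
    have hge : runSup f u' ≤ runSup f u := runSup_mono hf hc
    rw [abs_sub_lt_iff]; constructor <;> linarith

end RunSup
section RunInf
variable {f : ℝ → ℝ}


lemma abs_min_sub_min_le_abs' (a b c : ℝ) : |min a c - min b c| ≤ |a - b| := by
  rcases le_total a c with h|h <;> rcases le_total b c with h'|h' <;>
    simp [min_eq_left, min_eq_right, *] <;> rw [abs_le] <;> constructor <;>
    nlinarith [le_abs_self (a-b), neg_abs_le (a-b)]

lemma runInf_one : runInf f 1 = f 1 := by simp [runInf]

lemma runInf_split (hf : Continuous f) {v v' : ℝ} (h : v ≤ v') (h1 : v' ≤ 1) :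
    sInf (f '' Icc v 1) = min (sInf (f '' Icc v v')) (sInf (f '' Icc v' 1)) := by
  rw [← Icc_union_Icc_eq_Icc h h1, image_union]
  exact csInf_union ((isCompact_Icc.image hf).bddBelow) ((nonempty_Icc.2 h).image f)
    ((isCompact_Icc.image hf).bddBelow) ((nonempty_Icc.2 h1).image f)

lemma runInf_cont (hf : Continuous f) : Continuous (runInf f) := by
  rw [Metric.continuous_iff]
  intro s ε hε
  set v := min s 1 with hv
  obtain ⟨κ, hκ0, hκ⟩ := Metric.continuous_iff.1 hf v (ε/4) (by linarith)
  refine ⟨κ, hκ0, fun s' hs' => ?_⟩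
  set v' := min s' 1 with hv'
  have hvv : |v' - v| ≤ dist s' s := by
    rw [Real.dist_eq]; exact abs_min_sub_min_le_abs' s' s 1
  have key : ∀ w, w ∈ Icc (min v v') (max v v') → |f w - f v| ≤ ε/4 := by
    intro w hw
    have hwv : |w - v| ≤ |v' - v| := by
      rcases le_total v v' with hc | hc
      · have : w ∈ Icc v v' := by simpa [min_eq_left hc, max_eq_right hc] using hw
        rw [abs_of_nonneg (by linarith [this.1]), abs_of_nonneg (by linarith)]
        linarith [this.2]
      · have : w ∈ Icc v' v := by simpa [min_eq_right hc, max_eq_left hc] using hw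
        rw [abs_of_nonpos (by linarith [this.2]), abs_of_nonpos (by linarith)]
        linarith [this.1]
    have : dist w v < κ := by
      rw [Real.dist_eq]; exact lt_of_le_of_lt (hwv.trans hvv) hs'
    have := hκ w this
    rw [Real.dist_eq] at this; exact this.le
  have hfv' : |f v' - f v| ≤ ε/4 := key v' ⟨min_le_right _ _, le_max_right _ _⟩
  have hv1 : v ≤ 1 := min_le_right _ _
  have hv'1 : v' ≤ 1 := min_le_right _ _
  rw [Real.dist_eq]
  rcases le_total s s' with hc | hc
  · -- v ≤ v', runInf f s ≤ runInf f s'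
    have hvle : v ≤ v' := min_le_min hc le_rfl
    have hsplit : runInf f s = min (sInf (f '' Icc v v')) (runInf f s') := by
      rw [runInf, runInf]
      simpa [min_eq_left hv1, min_eq_left hv'1] using runInf_split hf hvle hv'1
    have hS : f v - ε/4 ≤ sInf (f '' Icc v v') := by
      refine le_csInf ((nonempty_Icc.2 hvle).image f) ?_
      rintro _ ⟨w, hw, rfl⟩
      have := abs_le.1 (key w (by simpa [min_eq_left hvle, max_eq_right hvle] using hw))
      linarith [this.1]
    have hfvge : runInf f s ≤ f v := by
      rw [runInf]
      exact csInf_le ((isCompact_Icc.image hf).bddBelow) ⟨v, ⟨le_rfl, hv1⟩, rfl⟩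
    have hle : runInf f s ≥ runInf f s' - ε/2 := by
      rw [hsplit]
      rcases min_cases (sInf (f '' Icc v v')) (runInf f s') with ⟨h1, _⟩ | ⟨h1, _⟩
      · rw [h1]
        have h3 : runInf f s' ≤ f v' := by
          rw [runInf]
          exact csInf_le ((isCompact_Icc.image hf).bddBelow) ⟨v', ⟨le_rfl, hv'1⟩, rfl⟩
        have := abs_le.1 hfv'
        linarith [this.1, this.2]
      · rw [h1]; linarith
    have hge : runInf f s ≤ runInf f s' := by
      rw [hsplit]; exact min_le_right _ _
    rw [abs_sub_lt_iff]; constructor <;> linarith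
  · have hvle : v' ≤ v := min_le_min hc le_rfl
    have hsplit : runInf f s' = min (sInf (f '' Icc v' v)) (runInf f s) := by
      rw [runInf, runInf]
      simpa [min_eq_left hv1, min_eq_left hv'1] using runInf_split hf hvle hv1
    have hS : f v - ε/2 ≤ sInf (f '' Icc v' v) := by
      refine le_csInf ((nonempty_Icc.2 hvle).image f) ?_
      rintro _ ⟨w, hw, rfl⟩
      have := abs_le.1 (key w (by simpa [min_eq_right hvle, max_eq_left hvle] using hw))
      linarith [this.1]
    have hfvge : runInf f s ≤ f v := by
      rw [runInf]
      exact csInf_le ((isCompact_Icc.image hf).bddBelow) ⟨v, ⟨le_rfl, hv1⟩, rfl⟩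
    have hle : runInf f s' ≥ runInf f s - ε/2 := by
      rw [hsplit]
      rcases min_cases (sInf (f '' Icc v' v)) (runInf f s) with ⟨h1, _⟩ | ⟨h1, _⟩
      · rw [h1]; linarith
      · rw [h1]; linarith
    have hge : runInf f s' ≤ runInf f s := by
      rw [hsplit]; exact min_le_right _ _
    rw [abs_sub_lt_iff]; constructor <;> linarith
end RunInf

section Core

variable {a b δ₁ δ'₁ δ'' Δ : ℝ} {p x q y : ℝ → ℝ}

/-- Core matching construction for the segment-proxy lemma. -/
lemma core_matching
    (hp : Continuous p) (hq : Continuous q)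
    (hxm : Monotone x) (hym : Monotone y)
    (hxa : ∀ s, a ≤ x s) (hxb : ∀ s, x s ≤ b) (hx1 : x 1 = b)
    (hya : ∀ u, a ≤ y u)
    (hpx : ∀ s, |p s - x s| ≤ δ₁)
    (hqy : ∀ u, |q u - y u| ≤ δ'₁)
    (hq0 : q 0 = a) (hq1 : q 1 = b) (hqb : ∀ u, q u ≤ b)
    (h00 : |p 0 - a| ≤ δ'')
    (hd1 : 0 ≤ δ₁) (hd2 : 0 ≤ δ'₁)
    (hD1 : δ₁ ≤ Δ) (hD2 : δ'' + δ'₁ ≤ Δ) (hD3 : 2*δ'₁ - δ₁ ≤ Δ) :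
    ∃ F G : ℝ → ℝ, Continuous F ∧ Monotone F ∧ Continuous G ∧ Monotone G ∧
      F 0 = 0 ∧ F 1 = 1 ∧ G 0 = 0 ∧ G 1 = 1 ∧
      (∀ t, 0 ≤ t → t ≤ 1 →
        (0 ≤ F t ∧ F t ≤ 1 ∧ 0 ≤ G t ∧ G t ≤ 1 ∧ |p (F t) - q (G t)| ≤ Δ)) := by
  -- running max of q
  set M : ℝ → ℝ := runSup q with hM
  have Mc : Continuous M := runSup_cont hq
  have Mm : Monotone M := runSup_mono hq
  have M0 : M 0 = a := by rw [hM, runSup_zero, hq0]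
  have Mub : ∀ u, M u ≤ b := fun u => runSup_le (fun w _ _ => hqb w)
  have M1 : M 1 = b := le_antisymm (Mub 1) (by
    have := le_runSup hq (zero_le_one) (le_max_left (1:ℝ) 0)
    rwa [hq1] at this)
  have Mge : ∀ u, 0 ≤ u → q u ≤ M u := fun u hu =>
    le_runSup hq hu (le_max_left u 0)
  have Mlb : ∀ u, a ≤ M u := fun u => by
    have := le_runSup hq (le_refl 0) (le_max_right u 0)
    rwa [hq0] at this
  -- q is within 2δ'₁ below its running max
  have qM : ∀ u, 0 ≤ u → u ≤ 1 → M u - 2*δ'₁ ≤ q u := by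
    intro u hu0 hu1
    obtain ⟨z, hz0, hz1, hz⟩ := runSup_attain hq u
    have hz1' : z ≤ u := by rwa [max_eq_left hu0] at hz1
    have h1 : y z ≥ q z - δ'₁ := by have := abs_le.1 (hqy z); linarith [this.1]
    have h2 : y u ≥ y z := hym hz1'
    have h3 : q u ≥ y u - δ'₁ := by have := abs_le.1 (hqy u); linarith [this.2]
    have hMu : M u = q z := hz
    linarith
  have qa : ∀ u, a - δ'₁ ≤ q u := fun u => by
    have := abs_le.1 (hqy u); linarith [hya u, this.2]
  -- the monotone guide R
  set A : ℝ → ℝ := fun s => runSup p s - δ₁ with hA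
  set Bf : ℝ → ℝ := fun s => min b (runInf p s + δ₁) with hB
  set R : ℝ → ℝ := fun s => max (A s) (Bf s) with hR
  have Ac : Continuous A := (runSup_cont hp).sub continuous_const
  have Bc : Continuous Bf := continuous_const.min ((runInf_cont hp).add continuous_const)
  have Rc : Continuous R := Ac.max Bc
  have Am : Monotone A := fun s s' h => by
    simp only [hA]; exact sub_le_sub_right (runSup_mono hp h) δ₁
  have Bm : Monotone Bf := fun s s' h => by
    simp only [hB]; exact min_le_min le_rfl (add_le_add_left (runInf_mono hp h) δ₁)
  have Rm : Monotone R := fun s s' h => max_le_max (Am h) (Bm h)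
  have Axb : ∀ s, A s ≤ x (max s 0) := by
    intro s
    simp only [hA, sub_le_iff_le_add]
    refine runSup_le fun w hw0 hw1 => ?_
    have := abs_le.1 (hpx w)
    have := hxm hw1
    linarith [this, (abs_le.1 (hpx w)).1]
  have Rb : ∀ s, R s ≤ b := by
    intro s
    refine max_le ((Axb s).trans (hxb _)) (min_le_left _ _)
  have Rge : ∀ s, 0 ≤ s → p s - δ₁ ≤ R s := by
    intro s hs
    refine le_trans ?_ (le_max_left _ _)
    simp only [hA, sub_le_sub_iff_right]
    exact le_runSup hp hs (le_max_left s 0)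
  have Rle : ∀ s, 0 ≤ s → s ≤ 1 → R s ≤ p s + δ₁ := by
    intro s hs0 hs1
    refine max_le ?_ ?_
    · have h1 : A s ≤ x s := by
        have := Axb s; rwa [max_eq_left hs0] at this
      have := abs_le.1 (hpx s)
      linarith [this.1]
    · refine (min_le_right _ _).trans ?_
      have : runInf p s ≤ p s := runInf_le hp le_rfl hs1
      linarith
  have R1 : R 1 = b := by
    refine le_antisymm (Rb 1) ?_
    refine le_trans ?_ (le_max_right _ _)
    have h1 : runInf p 1 = p 1 := runInf_one
    have h2 : p 1 ≥ b - δ₁ := by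
      have := abs_le.1 (hpx 1); rw [hx1] at this; linarith [this.1]
    simp only [hB, h1, le_min_iff]
    exact ⟨le_rfl, by linarith⟩
  have pxa : ∀ s, a - δ₁ ≤ p s := fun s => by
    have := abs_le.1 (hpx s); linarith [hxa s, this.1]
  have R0le : R 0 ≤ p 0 + δ₁ := Rle 0 le_rfl zero_le_one
  have R0b : R 0 ≤ b := Rb 0
  -- the stopping positions s♯
  set SS : ℝ → Set ℝ := fun lam => {s | s ∈ Icc (0:ℝ) 1 ∧ lam ≤ R s ∧ p s ≤ lam - δ₁}
    with hSS
  have SSclosed : ∀ lam, IsClosed (SS lam) := by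
    intro lam
    have : SS lam = (Icc (0:ℝ) 1) ∩ (R ⁻¹' Ici lam ∩ p ⁻¹' Iic (lam - δ₁)) := by
      ext s; simp [hSS, mem_Icc, and_assoc]
    rw [this]
    exact isClosed_Icc.inter ((isClosed_Ici.preimage Rc).inter (isClosed_Iic.preimage hp))
  have SSne : ∀ lam, R 0 < lam → lam < b → (SS lam).Nonempty := by
    intro lam h0 h1
    have : lam ∈ Icc (R 0) (R 1) := ⟨h0.le, by rw [R1]; exact h1.le⟩
    obtain ⟨s₀, hs₀, hRs₀⟩ := intermediate_value_Icc zero_le_one Rc.continuousOn this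
    have hBle : Bf s₀ ≤ lam := by
      rw [← hRs₀]; exact le_max_right _ _
    have hinf : runInf p s₀ + δ₁ ≤ lam := by
      rcases min_cases b (runInf p s₀ + δ₁) with ⟨he, hle⟩ | ⟨he, hle⟩
      · exfalso
        have : Bf s₀ = b := he
        rw [this] at hBle; linarith
      · have : Bf s₀ = runInf p s₀ + δ₁ := he
        rwa [this] at hBle
    obtain ⟨z, hz0, hz1, hz⟩ := runInf_attain hp s₀
    have hz0' : s₀ ≤ z := by rwa [min_eq_left hs₀.2] at hz0
    refine ⟨z, ⟨hs₀.1.trans hz0', hz1⟩, ?_, ?_⟩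
    · exact hRs₀ ▸ Rm hz0'
    · rw [← hz]; linarith
  set ssharp : ℝ → ℝ := fun lam => sInf (SS lam) with hssharp
  have ssharp_mem : ∀ lam, R 0 < lam → lam < b → ssharp lam ∈ SS lam := fun lam h0 h1 =>
    (SSclosed lam).csInf_mem (SSne lam h0 h1) ⟨0, fun z hz => hz.1.1⟩
  have ssharp_R : ∀ lam, R 0 < lam → lam < b → R (ssharp lam) = lam := by
    intro lam h0 h1
    obtain ⟨hmem, hge, hle⟩ := ssharp_mem lam h0 h1
    refine le_antisymm ?_ hge
    have := Rle _ hmem.1 hmem.2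
    linarith
  have ssharp_p : ∀ lam, R 0 < lam → lam < b → p (ssharp lam) = lam - δ₁ := by
    intro lam h0 h1
    obtain ⟨hmem, hge, hle⟩ := ssharp_mem lam h0 h1
    refine le_antisymm hle ?_
    have := Rle _ hmem.1 hmem.2
    linarith
  have ssharp_mono : ∀ lam lam', R 0 < lam → lam < b → R 0 < lam' → lam' < b →
      lam ≤ lam' → ssharp lam ≤ ssharp lam' := by
    intro lam lam' h0 h1 h0' h1' hle
    rcases eq_or_lt_of_le hle with he | hlt
    · subst he; exact le_rfl
    · by_contra hcon
      push_neg at hcon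
      have := Rm hcon.le
      rw [ssharp_R lam h0 h1, ssharp_R lam' h0' h1'] at this
      linarith
  -- the top position s♭
  set TT : Set ℝ := {s | s ∈ Icc (0:ℝ) 1 ∧ b ≤ R s} with hTT
  have TTclosed : IsClosed TT := by
    have : TT = (Icc (0:ℝ) 1) ∩ R ⁻¹' Ici b := by
      ext s; simp [hTT, mem_Icc, and_assoc]
    rw [this]
    exact isClosed_Icc.inter (isClosed_Ici.preimage Rc)
  have TTne : TT.Nonempty := ⟨1, ⟨zero_le_one, le_rfl⟩, R1.ge⟩
  set sflat : ℝ := sInf TT with hsflat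
  have sflat_mem : sflat ∈ TT := TTclosed.csInf_mem TTne ⟨0, fun z hz => hz.1.1⟩
  have sflat_R : R sflat = b := le_antisymm (Rb _) sflat_mem.2
  have sflat01 : sflat ∈ Icc (0:ℝ) 1 := sflat_mem.1
  -- p sflat = b - δ₁ when R 0 < b
  have pflat : R 0 < b → p sflat = b - δ₁ := by
    intro hR0b
    set lamseq : ℕ → ℝ := fun n => b - (b - R 0)/2 * (1/(n+1)) with hlamseq
    have hlam0 : ∀ n : ℕ, R 0 < lamseq n := by
      intro n
      have h1 : (0:ℝ) < 1/((n:ℝ)+1) := by positivity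
      have h2 : (1:ℝ)/((n:ℝ)+1) ≤ 1 := by
        rw [div_le_one (by positivity)]; linarith [Nat.cast_nonneg (α := ℝ) n]
      have : (b - R 0)/2 * (1/(n+1)) ≤ (b - R 0)/2 * 1 :=
        mul_le_mul_of_nonneg_left h2 (by linarith)
      simp only [hlamseq]
      nlinarith
    have hlam1 : ∀ n : ℕ, lamseq n < b := by
      intro n
      have h1 : (0:ℝ) < 1/((n:ℝ)+1) := by positivity
      have h2 : (0:ℝ) < (b - R 0)/2 := by linarith
      have : 0 < (b - R 0)/2 * (1/(n+1)) := mul_pos h2 h1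
      simp only [hlamseq]; linarith
    have hlmono : Monotone lamseq := by
      intro n m hnm
      simp only [hlamseq, sub_le_sub_iff_left]
      refine mul_le_mul_of_nonneg_left ?_ (by linarith)
      refine one_div_le_one_div_of_le (by positivity) ?_
      have : (n:ℝ) ≤ m := Nat.cast_le.2 hnm
      linarith
    set sn : ℕ → ℝ := fun n => ssharp (lamseq n) with hsn
    have hsnmono : Monotone sn := fun n m hnm =>
      ssharp_mono _ _ (hlam0 n) (hlam1 n) (hlam0 m) (hlam1 m) (hlmono hnm)
    have hsnbdd : BddAbove (range sn) := by
      refine ⟨1, ?_⟩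
      rintro _ ⟨n, rfl⟩
      exact (ssharp_mem _ (hlam0 n) (hlam1 n)).1.2
    set shat : ℝ := ⨆ n, sn n with hshat
    have htend : Filter.Tendsto sn Filter.atTop (nhds shat) :=
      tendsto_atTop_ciSup hsnmono hsnbdd
    have hlamtend : Filter.Tendsto lamseq Filter.atTop (nhds b) := by
      have h1 : Filter.Tendsto (fun n : ℕ => 1/((n:ℝ)+1)) Filter.atTop (nhds 0) :=
        tendsto_one_div_add_atTop_nhds_zero_nat
      have h2 := (h1.const_mul ((b - R 0)/2)).const_sub b
      have h3 : lamseq = fun n : ℕ => b - (b - R 0)/2 * (1/((n:ℝ)+1)) := rfl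
      rw [h3]
      simpa [one_div] using h2
    have hpshat : p shat = b - δ₁ := by
      have h1 : Filter.Tendsto (fun n => p (sn n)) Filter.atTop (nhds (p shat)) :=
        (hp.continuousAt.tendsto).comp htend
      have h2 : Filter.Tendsto (fun n => p (sn n)) Filter.atTop (nhds (b - δ₁)) := by
        have : (fun n => p (sn n)) = fun n => lamseq n - δ₁ := by
          funext n; exact ssharp_p _ (hlam0 n) (hlam1 n)
        rw [this]
        exact hlamtend.sub_const δ₁
      exact tendsto_nhds_unique h1 h2
    have hRshat : R shat = b := by
      have h1 : Filter.Tendsto (fun n => R (sn n)) Filter.atTop (nhds (R shat)) :=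
        (Rc.continuousAt.tendsto).comp htend
      have h2 : Filter.Tendsto (fun n => R (sn n)) Filter.atTop (nhds b) := by
        have : (fun n => R (sn n)) = lamseq := by
          funext n; exact ssharp_R _ (hlam0 n) (hlam1 n)
        rw [this]; exact hlamtend
      exact tendsto_nhds_unique h1 h2
    have hshat01 : shat ∈ Icc (0:ℝ) 1 := by
      constructor
      · have := le_ciSup hsnbdd 0
        have h0 := (ssharp_mem _ (hlam0 0) (hlam1 0)).1.1
        exact h0.trans this
      · exact ciSup_le fun n => (ssharp_mem _ (hlam0 n) (hlam1 n)).1.2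
    have h1 : sflat ≤ shat := csInf_le ⟨0, fun z hz => hz.1.1⟩ ⟨hshat01, hRshat.ge⟩
    have h2 : shat ≤ sflat := by
      refine ciSup_le fun n => ?_
      by_contra hcon
      push_neg at hcon
      have := Rm hcon.le
      rw [sflat_R, ssharp_R _ (hlam0 n) (hlam1 n)] at this
      exact absurd this (not_le.2 (hlam1 n))
    have : sflat = shat := le_antisymm h1 h2
    rw [this]; exact hpshat
  -- the matching position function h
  set H : ℝ → ℝ := fun m => if m ≤ R 0 then 0 else if m < b then ssharp m else sflat
    with hH
  set h : ℝ → ℝ := fun u => H (M u) with hh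
  have h01 : ∀ u, 0 ≤ h u ∧ h u ≤ 1 := by
    intro u
    simp only [hh, hH]
    split_ifs with c1 c2
    · exact ⟨le_rfl, zero_le_one⟩
    · push_neg at c1
      have := (ssharp_mem (M u) c1 c2).1
      exact ⟨this.1, this.2⟩
    · exact ⟨sflat01.1, sflat01.2⟩
  have Rh : ∀ u, R (h u) = max (R 0) (M u) := by
    intro u
    simp only [hh, hH]
    split_ifs with c1 c2
    · exact (max_eq_left c1).symm
    · push_neg at c1
      rw [ssharp_R (M u) c1 c2]
      exact (max_eq_right c1.le).symm
    · push_neg at c1 c2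
      have hMb : M u = b := le_antisymm (Mub u) c2
      rw [sflat_R, hMb]
      exact (max_eq_right R0b).symm
  have hbot : ∀ u, M u ≤ R 0 → h u = 0 := by
    intro u hc; simp only [hh, hH, if_pos hc]
  have hmid : ∀ u, R 0 < M u → M u < b → h u = ssharp (M u) := by
    intro u h1 h2; simp only [hh, hH, if_neg (not_le.2 h1), if_pos h2]
  have htopb : ∀ u, R 0 < M u → ¬(M u < b) → h u = sflat := by
    intro u h1 h2; simp only [hh, hH, if_neg (not_le.2 h1), if_neg h2]
  have hMtop : ∀ u, ¬(M u < b) → M u = b := fun u h2 =>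
    le_antisymm (Mub u) (not_lt.1 h2)
  have ssharp_le_sflat : ∀ lam, R 0 < lam → lam < b → ssharp lam ≤ sflat := by
    intro lam h1 h2
    by_contra hcon
    push_neg at hcon
    have := Rm hcon.le
    rw [sflat_R, ssharp_R _ h1 h2] at this
    exact absurd this (not_le.2 h2)
  have hmono : ∀ u u', u ≤ u' → h u ≤ h u' := by
    intro u u' huu
    have hMle : M u ≤ M u' := Mm huu
    rcases le_or_gt (M u') (R 0) with c1' | c1'
    · rw [hbot u (hMle.trans c1'), hbot u' c1']
    · rcases le_or_gt (M u) (R 0) with c1 | c1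
      · rw [hbot u c1]
        exact (h01 u').1
      · rcases lt_or_ge (M u') b with c2' | c2'
        · rw [hmid u c1 (lt_of_le_of_lt hMle c2'), hmid u' c1' c2']
          exact ssharp_mono _ _ c1 (lt_of_le_of_lt hMle c2') c1' c2' hMle
        · rw [htopb u' c1' (not_lt.2 c2')]
          rcases lt_or_ge (M u) b with c2 | c2
          · rw [hmid u c1 c2]
            exact ssharp_le_sflat _ c1 c2
          · rw [htopb u c1 (not_lt.2 c2)]
  -- the coupled parametrization
  set Tc : ℝ → Set ℝ := fun c => {w | w ∈ Icc (0:ℝ) 1 ∧ w + h w ≤ c} with hTc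
  have Tcbdd : ∀ c, BddAbove (Tc c) := fun c => ⟨1, fun w hw => hw.1.2⟩
  set vv : ℝ → ℝ := fun c => sSup (Tc c) with hvv
  set sg : ℝ → ℝ := fun c => c - vv c with hsg
  have vv0le : ∀ c, 0 ≤ vv c := by
    intro c
    rcases eq_empty_or_nonempty (Tc c) with he | hne
    · simp only [hvv, he, Real.sSup_empty, le_refl]
    · obtain ⟨w, hw⟩ := hne
      exact hw.1.1.trans (le_csSup (Tcbdd c) hw)
  have vvle1 : ∀ c, vv c ≤ 1 := by
    intro c
    rcases eq_empty_or_nonempty (Tc c) with he | hne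
    · simp only [hvv, he, Real.sSup_empty]; exact zero_le_one
    · exact csSup_le hne fun w hw => hw.1.2
  have vvlip : ∀ c c', c ≤ c' → vv c' ≤ vv c + (c' - c) := by
    intro c c' hcc
    rcases eq_empty_or_nonempty (Tc c') with he | hne
    · simp only [hvv, he, Real.sSup_empty]
      linarith [vv0le c]
    · refine csSup_le hne fun w hw => ?_
      rcases le_or_gt w (c' - c) with hwd | hwd
      · linarith [vv0le c]
      · have hmem : w - (c' - c) ∈ Tc c := by
          refine ⟨⟨by linarith, by linarith [hw.1.2, hcc]⟩, ?_⟩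
          have := hmono (w - (c' - c)) w (by linarith)
          linarith [hw.2]
        have := le_csSup (Tcbdd c) hmem
        simp only [hvv]
        linarith
  have vvmono : Monotone vv := by
    intro c c' hcc
    rcases eq_empty_or_nonempty (Tc c) with he | hne
    · simp only [hvv, he, Real.sSup_empty]
      exact vv0le c'
    · exact csSup_le_csSup (Tcbdd c') hne fun w hw => ⟨hw.1, hw.2.trans hcc⟩
  have sgmono : Monotone sg := by
    intro c c' hcc
    simp only [hsg]
    have := vvlip c c' hcc
    linarith
  have vvcont : Continuous vv := by
    have : LipschitzWith 1 vv := by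
      refine LipschitzWith.of_dist_le_mul fun c c' => ?_
      rw [NNReal.coe_one, one_mul, Real.dist_eq, Real.dist_eq]
      rcases le_total c c' with hcc | hcc
      · have h1 := vvlip c c' hcc
        have h2 := vvmono hcc
        rw [abs_sub_le_iff, abs_of_nonpos (by linarith)]
        constructor <;> linarith
      · have h1 := vvlip c' c hcc
        have h2 := vvmono hcc
        rw [abs_sub_le_iff, abs_of_nonneg (by linarith)]
        constructor <;> linarith
    exact this.continuous
  have sgcont : Continuous sg := continuous_id.sub vvcont
  have vvlec : ∀ c, 0 ≤ c → vv c ≤ c := by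
    intro c hc
    rcases eq_empty_or_nonempty (Tc c) with he | hne
    · simp only [hvv, he, Real.sSup_empty]; exact hc
    · refine csSup_le hne fun w hw => ?_
      have := (h01 w).1
      linarith [hw.2]
  have sg0le : ∀ c, 0 ≤ c → 0 ≤ sg c := fun c hc => by
    simp only [hsg]; linarith [vvlec c hc]
  have sgle1 : ∀ c, c ≤ 2 → sg c ≤ 1 := by
    intro c hc
    rcases le_or_gt c 1 with hc1 | hc1
    · simp only [hsg]; linarith [vv0le c]
    · have hmem : c - 1 ∈ Tc c := by
        refine ⟨⟨by linarith, by linarith⟩, ?_⟩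
        linarith [(h01 (c-1)).2]
      have := le_csSup (Tcbdd c) hmem
      simp only [hsg, hvv]
      linarith
  have vv_zero : vv 0 = 0 := by
    refine le_antisymm (vvlec 0 le_rfl) (vv0le 0)
  have vv_two : vv 2 = 1 := by
    refine le_antisymm (vvle1 2) ?_
    refine le_csSup (Tcbdd 2) ⟨⟨zero_le_one, le_rfl⟩, ?_⟩
    linarith [(h01 1).2]
  -- the two key inequalities for points on the completed graph
  have hP1 : ∀ c u', 0 ≤ u' → u' < vv c → h u' ≤ sg c := by
    intro c u' hu'0 hu'v
    have hne : (Tc c).Nonempty := by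
      by_contra hcon
      rw [not_nonempty_iff_eq_empty] at hcon
      simp only [hvv, hcon, Real.sSup_empty] at hu'v
      linarith
    have hvle : vv c ≤ c - h u' := by
      refine csSup_le hne fun w hw => ?_
      rcases le_or_gt w u' with hwu | hwu
      · obtain ⟨w₀, hw₀, hw₀gt⟩ := exists_lt_of_lt_csSup hne hu'v
        have h1 : h u' ≤ h w₀ := hmono _ _ hw₀gt.le
        have h2 : u' + h u' ≤ u' + h w₀ := by linarith
        have h3 : u' + h w₀ < w₀ + h w₀ := by linarith
        linarith [hw₀.2]
      · have := hmono u' w hwu.le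
        linarith [hw.2]
    simp only [hsg]
    linarith
  have hP2 : ∀ c u'', vv c < u'' → u'' ≤ 1 → sg c ≤ h u'' := by
    intro c u'' hvu hu1
    by_contra hcon
    push_neg at hcon
    have hvlt : vv c < c - h u'' := by simp only [hsg] at hcon; linarith
    set w := min ((vv c + u'')/2) ((vv c + (c - h u''))/2) with hw
    have hw1 : vv c < w := by
      simp only [hw, lt_min_iff]
      constructor <;> linarith
    have hw2 : w < u'' := by
      calc w ≤ (vv c + u'')/2 := min_le_left _ _
        _ < u'' := by linarith
    have hw3 : w < c - h u'' := by
      calc w ≤ (vv c + (c - h u''))/2 := min_le_right _ _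
        _ < c - h u'' := by linarith
    have hmem : w ∈ Tc c := by
      refine ⟨⟨le_trans (vv0le c) hw1.le, by linarith⟩, ?_⟩
      have := hmono w u'' hw2.le
      linarith
    have h5 := le_csSup (Tcbdd c) hmem
    have h6 : sSup (Tc c) = vv c := rfl
    rw [h6] at h5
    linarith
  -- bounds for p via R
  have pbnd : ∀ s, 0 ≤ s → s ≤ 1 → R s - δ₁ ≤ p s ∧ p s ≤ R s + δ₁ := by
    intro s h0 h1
    constructor
    · linarith [Rle s h0 h1]
    · linarith [Rge s h0]
  set lamf : ℝ → ℝ := fun u => max (R 0) (M u) with hlamf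
  have lamc : Continuous lamf := continuous_const.max Mc
  -- the key bound along the coupled parametrization
  have key : ∀ c, 0 ≤ c → c ≤ 2 → |p (sg c) - q (vv c)| ≤ Δ := by
    intro c hc0 hc2
    have hs0 : 0 ≤ sg c := sg0le c hc0
    have hs1 : sg c ≤ 1 := sgle1 c hc2
    have hv0 : 0 ≤ vv c := vv0le c
    have hv1 : vv c ≤ 1 := vvle1 c
    have hps := pbnd (sg c) hs0 hs1
    -- K1
    have K1 : R (sg c) ≤ lamf (vv c) := by
      rcases lt_or_ge (vv c) 1 with hvlt | hvge
      · by_contra hcon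
        push_neg at hcon
        obtain ⟨κ, hκ0, hκ⟩ := Metric.continuous_iff.1 lamc (vv c)
          (R (sg c) - lamf (vv c)) (by linarith)
        set u'' := min (vv c + κ/2) 1 with hu''
        have hu''v : vv c < u'' := by
          simp only [hu'', lt_min_iff]
          exact ⟨by linarith, hvlt⟩
        have hu''1 : u'' ≤ 1 := min_le_right _ _
        have hdist : dist u'' (vv c) < κ := by
          rw [Real.dist_eq, abs_of_nonneg (by linarith)]
          have : u'' ≤ vv c + κ/2 := min_le_left _ _
          linarith
        have hlam : lamf u'' < R (sg c) := by
          have := hκ u'' hdist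
          rw [Real.dist_eq] at this
          have := (abs_lt.1 this).2
          linarith
        have := hP2 c u'' hu''v hu''1
        have := Rm this
        rw [Rh u''] at this
        have : R (sg c) ≤ lamf u'' := this
        linarith
      · have hveq : vv c = 1 := le_antisymm hv1 hvge
        rw [hveq]
        simp only [hlamf, M1]
        rw [max_eq_right R0b]
        exact Rb _
    -- K2
    have K2 : 0 < vv c → lamf (vv c) ≤ R (sg c) := by
      intro hvpos
      by_contra hcon
      push_neg at hcon
      obtain ⟨κ, hκ0, hκ⟩ := Metric.continuous_iff.1 lamc (vv c)
        (lamf (vv c) - R (sg c)) (by linarith)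
      set u' := max (vv c - κ/2) 0 with hu'
      have hu'v : u' < vv c := by
        simp only [hu', max_lt_iff]
        exact ⟨by linarith, hvpos⟩
      have hu'0 : 0 ≤ u' := le_max_right _ _
      have hdist : dist u' (vv c) < κ := by
        rw [Real.dist_eq, abs_of_nonpos (by linarith)]
        have : vv c - κ/2 ≤ u' := le_max_left _ _
        linarith
      have hlam : R (sg c) < lamf u' := by
        have := hκ u' hdist
        rw [Real.dist_eq] at this
        have := (abs_lt.1 this).1
        linarith
      have := hP1 c u' hu'0 hu'v
      have := Rm this
      rw [Rh u'] at this
      have : lamf u' ≤ R (sg c) := this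
      linarith
    -- case analysis
    rcases eq_or_lt_of_le hv0 with hv0' | hvpos
    · -- v = 0
      have hq0' : q (vv c) = a := by rw [← hv0', hq0]
      rw [hq0']
      rcases le_or_gt (R 0) a with hra | hra
      · have hRsa : R (sg c) ≤ a := by
          have := K1
          rw [← hv0'] at this
          simp only [hlamf, M0] at this
          rwa [max_eq_right hra] at this
        rw [abs_sub_le_iff]
        constructor
        · linarith [hps.2]
        · linarith [pxa (sg c)]
      · -- a < R 0 : forced s = 0
        obtain ⟨κ, hκ0, hκ⟩ := Metric.continuous_iff.1 Mc 0 (R 0 - a) (by linarith)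
        set u'' := min (κ/2) 1 with hu''
        have hu''pos : 0 < u'' := by
          simp only [hu'', lt_min_iff]
          exact ⟨by linarith, zero_lt_one⟩
        have hdist : dist u'' 0 < κ := by
          rw [Real.dist_eq, sub_zero, abs_of_nonneg hu''pos.le]
          have : u'' ≤ κ/2 := min_le_left _ _
          linarith
        have hMu'' : M u'' ≤ R 0 := by
          have := hκ u'' hdist
          rw [Real.dist_eq, M0] at this
          have := (abs_lt.1 this).2
          linarith
        have hs : sg c ≤ 0 := by
          have := hP2 c u'' (by rw [← hv0']; exact hu''pos) (min_le_right _ _)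
          rwa [hbot u'' hMu''] at this
        have hseq : sg c = 0 := le_antisymm hs hs0
        rw [hseq]
        exact h00.trans (by linarith)
    · -- v > 0
      have hRlam : R (sg c) = lamf (vv c) := le_antisymm K1 (K2 hvpos)
      rcases eq_or_lt_of_le (Mge (vv c) hv0) with hqM | hqM
      · -- q v = M v
        rcases le_or_gt (R 0) (M (vv c)) with hrm | hrm
        · have : R (sg c) = M (vv c) := by
            rw [hRlam]; simp only [hlamf]; exact max_eq_right hrm
          rw [abs_sub_le_iff]
          constructor
          · linarith [hps.2, this.le, hqM.ge, hD1]
          · linarith [hps.1, this.ge, hqM.le, hD1]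
        · -- M v < R 0 : forced s = 0
          have hRs : R (sg c) = R 0 := by
            rw [hRlam]; simp only [hlamf]; exact max_eq_left hrm.le
          have hvlt1 : vv c < 1 := by
            rcases eq_or_lt_of_le hv1 with he | hlt
            · exfalso
              have : M (vv c) = b := by rw [he, M1]
              rw [this] at hrm
              linarith [R0b]
            · exact hlt
          obtain ⟨κ, hκ0, hκ⟩ := Metric.continuous_iff.1 Mc (vv c) (R 0 - M (vv c))
            (by linarith)
          set u'' := min (vv c + κ/2) 1 with hu''
          have hu''v : vv c < u'' := by
            simp only [hu'', lt_min_iff]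
            exact ⟨by linarith, hvlt1⟩
          have hdist : dist u'' (vv c) < κ := by
            rw [Real.dist_eq, abs_of_nonneg (by linarith)]
            have : u'' ≤ vv c + κ/2 := min_le_left _ _
            linarith
          have hMu'' : M u'' ≤ R 0 := by
            have := hκ u'' hdist
            rw [Real.dist_eq] at this
            have := (abs_lt.1 this).2
            linarith
          have hs : sg c ≤ 0 := by
            have := hP2 c u'' hu''v (min_le_right _ _)
            rwa [hbot u'' hMu''] at this
          have hseq : sg c = 0 := le_antisymm hs hs0
          rw [hseq]
          rw [abs_sub_le_iff]
          have hp0ub : p 0 ≤ a + δ'' := by linarith [(abs_le.1 h00).2]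
          constructor
          · -- p 0 - q v ≤ Δ
            linarith [qa (vv c)]
          · -- q v - p 0 ≤ Δ
            linarith [R0le, hqM.le, hrm.le, hD1]
      · -- q v < M v : dip interior, s is forced to h (vv c)
        have hvlt1 : vv c < 1 := by
          rcases eq_or_lt_of_le hv1 with he | hlt
          · exfalso
            have h1 : M (vv c) = b := by rw [he, M1]
            have h2 : q (vv c) = b := by rw [he, hq1]
            rw [h1, h2] at hqM
            exact lt_irrefl b hqM
          · exact hlt
        -- plateau to the left
        obtain ⟨z, hz0, hz1, hz⟩ := runSup_attain hq (vv c)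
        have hz1' : z ≤ vv c := by rwa [max_eq_left hv0] at hz1
        have hzlt : z < vv c := by
          rcases eq_or_lt_of_le hz1' with he | hlt
          · exfalso; rw [he] at hz; rw [← hz] at hqM; exact lt_irrefl _ hqM
          · exact hlt
        have hMz : M z = M (vv c) := by
          refine le_antisymm (Mm hz1') ?_
          have := Mge z hz0
          rw [← hz] at this
          exact this
        -- plateau to the right
        obtain ⟨κ, hκ0, hκ⟩ := Metric.continuous_iff.1 hq (vv c) (M (vv c) - q (vv c))
          (by linarith)
        set u₂ := min (vv c + κ/2) 1 with hu₂
        have hu₂v : vv c < u₂ := by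
          simp only [hu₂, lt_min_iff]
          exact ⟨by linarith, hvlt1⟩
        have hu₂1 : u₂ ≤ 1 := min_le_right _ _
        have hMu₂ : M u₂ = M (vv c) := by
          refine le_antisymm ?_ (Mm hu₂v.le)
          refine runSup_le fun w hw0 hw1 => ?_
          have hwu₂ : w ≤ u₂ := by rwa [max_eq_left (le_trans hv0 hu₂v.le)] at hw1
          rcases le_or_gt w (vv c) with hwv | hwv
          · exact (Mge w hw0).trans (Mm hwv)
          · have hdist : dist w (vv c) < κ := by
              rw [Real.dist_eq, abs_of_nonneg (by linarith)]
              have : u₂ ≤ vv c + κ/2 := min_le_left _ _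
              linarith
            have := hκ w hdist
            rw [Real.dist_eq] at this
            have := (abs_lt.1 this).2
            linarith
        have hhz : h z = h (vv c) := by simp only [hh, hMz]
        have hhu₂ : h u₂ = h (vv c) := by simp only [hh, hMu₂]
        have hseq : sg c = h (vv c) := by
          refine le_antisymm ?_ ?_
          · have := hP2 c u₂ hu₂v hu₂1
            rwa [hhu₂] at this
          · have := hP1 c z hz0 hzlt
            rwa [hhz] at this
        have hqvub : q (vv c) ≤ M (vv c) := Mge (vv c) hv0
        have hqvlb : M (vv c) - 2*δ'₁ ≤ q (vv c) := qM (vv c) hv0 hv1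
        rcases le_or_gt (M (vv c)) (R 0) with hb1 | hb1
        · -- bottom branch
          have : sg c = 0 := by rw [hseq, hbot _ hb1]
          rw [this, abs_sub_le_iff]
          have hp0ub : p 0 ≤ a + δ'' := by linarith [(abs_le.1 h00).2]
          constructor
          · linarith [qa (vv c)]
          · linarith [R0le]
        · rcases lt_or_ge (M (vv c)) b with hb2 | hb2
          · -- middle branch
            have hsv : sg c = ssharp (M (vv c)) := by rw [hseq, hmid _ hb1 hb2]
            have hpv : p (sg c) = M (vv c) - δ₁ := by
              rw [hsv]; exact ssharp_p _ hb1 hb2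
            rw [abs_sub_le_iff, hpv]
            constructor
            · linarith
            · linarith
          · -- top branch
            have hMvb : M (vv c) = b := le_antisymm (Mub _) hb2
            have hR0b' : R 0 < b := by rw [← hMvb]; exact hb1
            have hsv : sg c = sflat := by
              rw [hseq, htopb _ hb1 (not_lt.2 hb2)]
            have hpv : p (sg c) = b - δ₁ := by rw [hsv]; exact pflat hR0b'
            rw [abs_sub_le_iff, hpv]
            rw [hMvb] at hqvub hqvlb
            constructor
            · linarith
            · linarith
  -- package the final reparametrizations
  refine ⟨fun t => sg (2*t), fun t => vv (2*t), ?_, ?_, ?_, ?_, ?_, ?_, ?_, ?_, ?_⟩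
  · exact sgcont.comp (continuous_const.mul continuous_id)
  · intro t t' htt
    exact sgmono (by linarith)
  · exact vvcont.comp (continuous_const.mul continuous_id)
  · intro t t' htt
    exact vvmono (by linarith)
  · simp only [mul_zero]
    simp only [hsg, vv_zero, sub_zero]
  · norm_num
    simp only [hsg, vv_two]
    norm_num
  · simp only [mul_zero, vv_zero]
  · norm_num [vv_two]
  · intro t ht0 ht1
    exact ⟨sg0le _ (by linarith), sgle1 _ (by linarith), vv0le _, vvle1 _,
      key _ (by linarith) (by linarith)⟩

end Core

section Final

lemma monoSurj_endpoints (f : unitInterval → unitInterval) (hm : Monotone f)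
    (hs : Function.Surjective f) : f 0 = 0 ∧ f 1 = 1 := by
  constructor
  · obtain ⟨t, ht⟩ := hs 0
    refine le_antisymm ?_ (f 0).2.1
    calc f 0 ≤ f t := hm t.2.1
      _ = 0 := ht
  · obtain ⟨t, ht⟩ := hs 1
    refine le_antisymm (f 1).2.2 ?_
    calc (1:unitInterval) = f t := ht.symm
      _ ≤ f 1 := hm t.2.2

lemma frechet_extract (P X : unitInterval → ℝ) (hP : Continuous P) (hX : Continuous X)
    {d ε : ℝ} (hd : frechetDist P X ≤ d) (hε : 0 < ε) :
    ∃ f g : unitInterval → unitInterval,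
      Continuous f ∧ Monotone f ∧ Function.Surjective f ∧
      Continuous g ∧ Monotone g ∧ Function.Surjective g ∧
      ∀ t, |P (f t) - X (g t)| ≤ d + ε := by
  set S := {r : ℝ | ∃ f g : unitInterval → unitInterval,
    Continuous f ∧ Monotone f ∧ Function.Surjective f ∧
    Continuous g ∧ Monotone g ∧ Function.Surjective g ∧
    ∀ t, dist (P (f t)) (X (g t)) ≤ r} with hS
  have hSne : S.Nonempty := by
    set r₀ := sSup (Set.range fun t => dist (P t) (X t)) with hr₀
    refine ⟨r₀, id, id, continuous_id, monotone_id, Function.surjective_id,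
      continuous_id, monotone_id, Function.surjective_id, fun t => ?_⟩
    exact le_csSup (isCompact_range (hP.dist hX)).bddAbove (Set.mem_range_self t)
  have hlt : sInf S < d + ε := lt_of_le_of_lt hd (by linarith)
  obtain ⟨r, hrS, hr⟩ := exists_lt_of_csInf_lt hSne hlt
  obtain ⟨f, g, hfc, hfm, hfs, hgc, hgm, hgs, hb⟩ := hrS
  refine ⟨f, g, hfc, hfm, hfs, hgc, hgm, hgs, fun t => ?_⟩
  have := hb t
  rw [Real.dist_eq] at this
  linarith

lemma segCurve_real (a b : ℝ) (t : unitInterval) :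
    segCurve a b t = a + (t:ℝ) * (b - a) := by
  simp only [segCurve, smul_eq_mul]
  ring

end Final

/-- Segment-proxy lemma for signature edges, case (ii):
start points within `δ''` and `Q` attains its maximum at the endpoint. -/
theorem frechetDist_le_signatureEdge_maxAtEnd (δ δ' δ'' : ℝ)
    (hδ' : 0 ≤ δ') (hδ'' : 0 ≤ δ'') (hsum : δ = δ' + δ'')
    (a b : ℝ) (hab : a ≤ b)
    (Q : unitInterval → ℝ) (hQc : Continuous Q) (hQ0 : Q 0 = a) (hQ1 : Q 1 = b)
    (hQX : frechetDist Q (segCurve a b) ≤ δ')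
    (P : unitInterval → ℝ) (hPc : Continuous P)
    (hPX : frechetDist P (segCurve a b) ≤ δ)
    (h0 : |Q 0 - P 0| ≤ δ'') (hmax : ∀ t : unitInterval, Q t ≤ Q 1) :
    frechetDist P Q ≤ δ := by
  have hXc : Continuous (segCurve a b : unitInterval → ℝ) := by
    have : Continuous fun t : unitInterval => a + (t:ℝ) * (b - a) :=
      continuous_const.add (continuous_subtype_val.mul continuous_const)
    refine Continuous.congr this fun t => (segCurve_real a b t).symm
  refine le_of_forall_pos_le_add fun ε hε => ?_
  obtain ⟨f₁, g₁, hf₁c, hf₁m, hf₁s, hg₁c, hg₁m, hg₁s, hb₁⟩ :=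
    frechet_extract P (segCurve a b) hPc hXc hPX hε
  obtain ⟨f₂, g₂, hf₂c, hf₂m, hf₂s, hg₂c, hg₂m, hg₂s, hb₂⟩ :=
    frechet_extract Q (segCurve a b) hQc hXc hQX hε
  set cl : ℝ → unitInterval := Set.projIcc 0 1 zero_le_one with hcl
  have hclc : Continuous cl := continuous_projIcc
  have hclm : Monotone cl := monotone_projIcc zero_le_one
  have hclmem : ∀ (s : ℝ) (h1 : 0 ≤ s) (h2 : s ≤ 1), cl s = ⟨s, ⟨h1, h2⟩⟩ := by
    intro s h1 h2
    exact Set.projIcc_of_mem zero_le_one ⟨h1, h2⟩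
  have hcl0 : cl 0 = 0 := by
    rw [hclmem 0 le_rfl zero_le_one]; rfl
  have hcl1 : cl 1 = 1 := by
    rw [hclmem 1 zero_le_one le_rfl]; rfl
  set p : ℝ → ℝ := fun s => P (f₁ (cl s)) with hpdef
  set x : ℝ → ℝ := fun s => segCurve a b (g₁ (cl s)) with hxdef
  set q : ℝ → ℝ := fun u => Q (f₂ (cl u)) with hqdef
  set y : ℝ → ℝ := fun u => segCurve a b (g₂ (cl u)) with hydef
  have segmono : Monotone (fun t : unitInterval => segCurve a b t) := by
    intro u v huv
    show segCurve a b u ≤ segCurve a b v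
    rw [segCurve_real, segCurve_real]
    have : (u:ℝ) ≤ (v:ℝ) := huv
    nlinarith
  have segmem : ∀ t : unitInterval, a ≤ segCurve a b t ∧ segCurve a b t ≤ b := by
    intro t
    rw [segCurve_real]
    have h1 := t.2.1
    have h2 := t.2.2
    constructor <;> nlinarith
  have hp : Continuous p := hPc.comp (hf₁c.comp hclc)
  have hq : Continuous q := hQc.comp (hf₂c.comp hclc)
  have hxm : Monotone x := fun s s' h => segmono (hg₁m (hclm h))
  have hym : Monotone y := fun s s' h => segmono (hg₂m (hclm h))
  have hxa : ∀ s, a ≤ x s := fun s => (segmem _).1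
  have hxb : ∀ s, x s ≤ b := fun s => (segmem _).2
  have hg₁1 : g₁ 1 = 1 := (monoSurj_endpoints g₁ hg₁m hg₁s).2
  have hf₁0 : f₁ 0 = 0 := (monoSurj_endpoints f₁ hf₁m hf₁s).1
  have hf₂0 : f₂ 0 = 0 := (monoSurj_endpoints f₂ hf₂m hf₂s).1
  have hf₂1 : f₂ 1 = 1 := (monoSurj_endpoints f₂ hf₂m hf₂s).2
  have seg1 : segCurve a b 1 = b := by
    rw [segCurve_real]; norm_num
  have hx1 : x 1 = b := by
    simp only [hxdef, hcl1, hg₁1, seg1]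
  have hya : ∀ u, a ≤ y u := fun u => (segmem _).1
  have hpx : ∀ s, |p s - x s| ≤ δ + ε := fun s => hb₁ (cl s)
  have hqy : ∀ u, |q u - y u| ≤ δ' + ε := fun u => hb₂ (cl u)
  have hq0' : q 0 = a := by simp only [hqdef, hcl0, hf₂0, hQ0]
  have hq1' : q 1 = b := by simp only [hqdef, hcl1, hf₂1, hQ1]
  have hqb : ∀ u, q u ≤ b := fun u => by
    have := hmax (f₂ (cl u)); rwa [hQ1] at this
  have h00 : |p 0 - a| ≤ δ'' := by
    have : p 0 = P 0 := by simp only [hpdef, hcl0, hf₁0]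
    rw [this, ← hQ0, abs_sub_comm]
    exact h0
  obtain ⟨F, G, Fc, Fm, Gc, Gm, F0, F1, G0, G1, hFG⟩ :=
    core_matching hp hq hxm hym hxa hxb hx1 hya hpx hqy hq0' hq1' hqb h00
      (by linarith) (by linarith)
      (le_refl (δ + ε)) (by linarith) (by linarith)
  set ff : unitInterval → unitInterval := fun t =>
    ⟨F t.1, (hFG t.1 t.2.1 t.2.2).1, (hFG t.1 t.2.1 t.2.2).2.1⟩ with hff
  set gg : unitInterval → unitInterval := fun t =>
    ⟨G t.1, (hFG t.1 t.2.1 t.2.2).2.2.1, (hFG t.1 t.2.1 t.2.2).2.2.2.1⟩ with hgg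
  have hffc : Continuous ff := Continuous.subtype_mk (Fc.comp continuous_subtype_val) _
  have hggc : Continuous gg := Continuous.subtype_mk (Gc.comp continuous_subtype_val) _
  have hffm : Monotone ff := fun t t' h => by
    simp only [hff, Subtype.mk_le_mk]
    exact Fm h
  have hggm : Monotone gg := fun t t' h => by
    simp only [hgg, Subtype.mk_le_mk]
    exact Gm h
  have hffs : Function.Surjective ff := by
    intro z
    have hmem : (z:ℝ) ∈ Set.Icc (F 0) (F 1) := by
      rw [F0, F1]; exact z.2
    obtain ⟨t, ht, hFt⟩ := intermediate_value_Icc zero_le_one Fc.continuousOn hmem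
    exact ⟨⟨t, ht⟩, Subtype.ext hFt⟩
  have hggs : Function.Surjective gg := by
    intro z
    have hmem : (z:ℝ) ∈ Set.Icc (G 0) (G 1) := by
      rw [G0, G1]; exact z.2
    obtain ⟨t, ht, hGt⟩ := intermediate_value_Icc zero_le_one Gc.continuousOn hmem
    exact ⟨⟨t, ht⟩, Subtype.ext hGt⟩
  have hmemS : (δ + ε) ∈ {r : ℝ | ∃ f g : unitInterval → unitInterval,
      Continuous f ∧ Monotone f ∧ Function.Surjective f ∧
      Continuous g ∧ Monotone g ∧ Function.Surjective g ∧
      ∀ t, dist (P (f t)) (Q (g t)) ≤ r} := by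
    refine ⟨fun t => f₁ (ff t), fun t => f₂ (gg t),
      hf₁c.comp hffc, hf₁m.comp hffm, hf₁s.comp hffs,
      hf₂c.comp hggc, hf₂m.comp hggm, hf₂s.comp hggs, fun t => ?_⟩
    have hcf : cl (F t.1) = ff t := by
      rw [hclmem (F t.1) (hFG t.1 t.2.1 t.2.2).1 (hFG t.1 t.2.1 t.2.2).2.1]
    have hcg : cl (G t.1) = gg t := by
      rw [hclmem (G t.1) (hFG t.1 t.2.1 t.2.2).2.2.1 (hFG t.1 t.2.1 t.2.2).2.2.2.1]
    have hkey := (hFG t.1 t.2.1 t.2.2).2.2.2.2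
    rw [Real.dist_eq]
    have hpe : p (F t.1) = P (f₁ (ff t)) := by rw [hpdef]; simp only; rw [hcf]
    have hqe : q (G t.1) = Q (f₂ (gg t)) := by rw [hqdef]; simp only; rw [hcg]
    rw [← hpe, ← hqe]
    exact hkey
  have hbdd : BddBelow {r : ℝ | ∃ f g : unitInterval → unitInterval,
      Continuous f ∧ Monotone f ∧ Function.Surjective f ∧
      Continuous g ∧ Monotone g ∧ Function.Surjective g ∧
      ∀ t, dist (P (f t)) (Q (g t)) ≤ r} := by
    refine ⟨0, ?_⟩
    rintro r ⟨f, g, -, -, -, -, -, -, hb⟩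
    exact le_trans dist_nonneg (hb 0)
  exact csInf_le hbdd hmemS
end

section
/- Let P, Q : [0,1] → R be one-dimensional curves with d_F(P, Q) ≤ δ, let P' be a δ-signature of P, and let Q' be a 2δ-signature of Q. Then d_F(P', Q') ≤ 3δ. -/
lemma unit_coe_nonneg (x : unitInterval) : (0:ℝ) ≤ x := x.2.1
lemma unit_coe_le_one (x : unitInterval) : (x:ℝ) ≤ 1 := x.2.2

/-- Edge formula for `polyCurve`. -/
lemma polyCurve_edge {n : ℕ} (p : Fin (n+1) → ℝ) {a : ℕ} (ha : a < n) (x : unitInterval)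
    (h1 : (a:ℝ) ≤ (x:ℝ) * n) (h2 : (x:ℝ) * n ≤ a + 1) :
    polyCurve n p x = (1 - ((x:ℝ)*n - a)) * p ⟨a, by omega⟩ + ((x:ℝ)*n - a) * p ⟨a+1, by omega⟩ := by
  have hX0 : (0:ℝ) ≤ (x:ℝ) * n := le_trans (by positivity) h1
  rcases lt_or_eq_of_le h2 with hlt | heq
  · have hfl : Nat.floor ((x:ℝ)*n) = a := by
      rw [Nat.floor_eq_iff hX0]
      constructor
      · exact_mod_cast h1
      · exact_mod_cast hlt
    have hmin : min (Nat.floor ((x:ℝ)*n)) (n-1) = a := by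
      rw [hfl]; omega
    simp only [polyCurve, hmin, smul_eq_mul]
    have e1 : min a n = a := by omega
    have e2 : min (a+1) n = a + 1 := by omega
    congr 2 <;> simp [e1, e2]
  · have heq' : (x:ℝ) * n = ((a + 1 : ℕ) : ℝ) := by push_cast; linarith
    have hfl : Nat.floor ((x:ℝ)*n) = a + 1 := by
      rw [heq', Nat.floor_natCast]
    rcases Nat.lt_or_ge (a+1) n with hcase | hcase
    · have hmin : min (Nat.floor ((x:ℝ)*n)) (n-1) = a + 1 := by rw [hfl]; omega
      simp only [polyCurve, hmin, smul_eq_mul]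
      have e1 : min (a+1) n = a + 1 := by omega
      have e2 : min (a+1+1) n = a + 2 := by omega
      have hx : (x:ℝ) * n - ((a+1 : ℕ):ℝ) = 0 := by rw [heq']; ring
      push_cast at hx ⊢
      rw [show (x:ℝ) * n - (a+1) = 0 by linarith, show (x:ℝ) * n - a = 1 by linarith]
      simp [e1, e2]
    · have hmin : min (Nat.floor ((x:ℝ)*n)) (n-1) = a := by rw [hfl]; omega
      simp only [polyCurve, hmin, smul_eq_mul]
      have e1 : min a n = a := by omega
      have e2 : min (a+1) n = a + 1 := by omega
      congr 2 <;> simp [e1, e2]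

/-- `polyCurve` at a vertex parameter. -/
lemma polyCurve_vparam {n : ℕ} (hn : 1 ≤ n) (p : Fin (n+1) → ℝ) (i : Fin (n+1)) :
    polyCurve n p (vparam n i) = p i := by
  have hn' : (0:ℝ) < n := by exact_mod_cast hn
  have hv : ((vparam n i : ℝ)) * n = (i:ℕ) := by
    simp only [vparam]
    field_simp
  rcases Nat.lt_or_ge (i:ℕ) n with hi | hi
  · rw [polyCurve_edge p hi (vparam n i) (by rw [hv]) (by rw [hv]; push_cast; linarith)]
    rw [hv]
    simp
  · have hi' : (i:ℕ) = n := by omega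
    have ha : n - 1 < n := by omega
    have hc : ((n - 1 : ℕ) : ℝ) = (n:ℝ) - 1 := by
      have : (1:ℕ) ≤ n := hn
      push_cast [this]; ring
    rw [polyCurve_edge p ha (vparam n i) (by rw [hv, hi', hc]; linarith)
      (by rw [hv, hi', hc]; linarith)]
    rw [hv, hi', hc]
    have e : n - 1 + 1 = n := by omega
    have : (⟨n - 1 + 1, by omega⟩ : Fin (n+1)) = i := by
      apply Fin.ext; simp only [e]; omega
    rw [this]
    ring_nf
/-- Clamp-sum formula for `polyCurve` over ℝ. -/
lemma polyCurve_eq_sum (n : ℕ) (p : Fin (n+1) → ℝ) (x : unitInterval) :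
    polyCurve n p x = p 0 + ∑ a ∈ Finset.range n,
      (min (max ((x:ℝ)*n - a) 0) 1) *
        (p ⟨min (a+1) n, Nat.lt_succ_of_le (min_le_right _ n)⟩
          - p ⟨min a n, Nat.lt_succ_of_le (min_le_right _ n)⟩) := by
  set pp : ℕ → ℝ := fun a => p ⟨min a n, Nat.lt_succ_of_le (min_le_right _ n)⟩ with hpp
  set X : ℝ := (x:ℝ) * n with hX
  have hX0 : 0 ≤ X := mul_nonneg (unit_coe_nonneg x) (Nat.cast_nonneg n)
  have hXn : X ≤ n := by
    rw [hX]
    calc (x:ℝ) * n ≤ 1 * n := by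
          apply mul_le_mul_of_nonneg_right (unit_coe_le_one x) (by positivity)
      _ = n := one_mul _
  rcases Nat.eq_zero_or_pos n with h0 | hn
  · subst h0
    simp only [Finset.range_zero, Finset.sum_empty, add_zero]
    simp only [polyCurve, smul_eq_mul]
    norm_num
  set a : ℕ := min (Nat.floor X) (n-1) with hadef
  have haln : a < n := by omega
  have haX : (a:ℝ) ≤ X := by
    calc (a:ℝ) ≤ (Nat.floor X : ℝ) := by exact_mod_cast min_le_left _ _
      _ ≤ X := Nat.floor_le hX0
  have hXa1 : X ≤ a + 1 := by
    rcases Nat.lt_or_ge (Nat.floor X) n with hfn | hfn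
    · have : a = min (Nat.floor X) (n-1) := hadef
      rcases Nat.lt_or_ge (Nat.floor X) (n-1) with h | h
      · have ha' : a = Nat.floor X := by omega
        rw [ha']
        exact le_of_lt (Nat.lt_floor_add_one X)
      · have ha' : a = n - 1 := by omega
        rw [ha']
        have : ((n-1 : ℕ):ℝ) = (n:ℝ) - 1 := by
          rw [Nat.cast_sub (by omega : 1 ≤ n), Nat.cast_one]
        rw [this]; linarith
    · have ha' : a = n - 1 := by omega
      rw [ha']
      have : ((n-1 : ℕ):ℝ) = (n:ℝ) - 1 := by
        rw [Nat.cast_sub (by omega : 1 ≤ n), Nat.cast_one]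
      rw [this]; linarith
  -- value of polyCurve
  have hlhs : polyCurve n p x = (1 - (X - a)) * pp a + (X - a) * pp (a+1) := by
    simp only [polyCurve, smul_eq_mul, ← hX, ← hadef, hpp]
  rw [hlhs]
  have hsplit : ∑ a' ∈ Finset.range n, (min (max (X - a') 0) 1) * (pp (a'+1) - pp a')
      = (∑ a' ∈ Finset.range (a+1), (min (max (X - a') 0) 1) * (pp (a'+1) - pp a')) := by
    rw [← Finset.sum_range_add_sum_Ico _ (by omega : a + 1 ≤ n)]
    have : ∑ a' ∈ Finset.Ico (a+1) n, (min (max (X - a') 0) 1) * (pp (a'+1) - pp a') = 0 := by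
      apply Finset.sum_eq_zero
      intro a' ha'
      simp only [Finset.mem_Ico] at ha'
      have : X - a' ≤ 0 := by
        have : (a:ℝ) + 1 ≤ a' := by exact_mod_cast ha'.1
        linarith
      rw [max_eq_right this]
      simp
    rw [this, add_zero]
  rw [hsplit, Finset.sum_range_succ]
  have hone : ∀ a' ∈ Finset.range a, (min (max (X - a') 0) 1) * (pp (a'+1) - pp a')
      = pp (a'+1) - pp a' := by
    intro a' ha'
    simp only [Finset.mem_range] at ha'
    have h1 : (1:ℝ) ≤ X - a' := by
      have : (a':ℝ) + 1 ≤ a := by exact_mod_cast ha'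
      linarith
    rw [max_eq_left (by linarith), min_eq_right h1, one_mul]
  rw [Finset.sum_congr rfl hone, Finset.sum_range_sub pp a]
  have hcl : min (max (X - a) 0) 1 = X - a := by
    rw [max_eq_left (by linarith), min_eq_left (by linarith)]
  rw [hcl]
  have hpp0 : pp 0 = p 0 := by
    simp only [hpp]
    congr 1
  rw [hpp0]
  ring

lemma polyCurve_monotone {n : ℕ} {p : Fin (n+1) → ℝ} (hp : Monotone p) :
    Monotone (polyCurve n p) := by
  intro x y hxy
  rw [polyCurve_eq_sum, polyCurve_eq_sum]
  apply add_le_add le_rfl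
  apply Finset.sum_le_sum
  intro a _
  have hd : (0:ℝ) ≤ p ⟨min (a+1) n, Nat.lt_succ_of_le (min_le_right _ n)⟩
      - p ⟨min a n, Nat.lt_succ_of_le (min_le_right _ n)⟩ := by
    rw [sub_nonneg]
    apply hp
    simp only [Fin.mk_le_mk]
    omega
  apply mul_le_mul_of_nonneg_right _ hd
  have hxy' : (x:ℝ) * n ≤ (y:ℝ) * n := by
    apply mul_le_mul_of_nonneg_right _ (by positivity)
    exact_mod_cast hxy
  exact min_le_min (max_le_max (by linarith) le_rfl) le_rfl

lemma polyCurve_continuous {n : ℕ} (p : Fin (n+1) → ℝ) :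
    Continuous (polyCurve n p) := by
  have : polyCurve n p = fun x : unitInterval => p 0 + ∑ a ∈ Finset.range n,
      (min (max ((x:ℝ)*n - a) 0) 1) *
        (p ⟨min (a+1) n, Nat.lt_succ_of_le (min_le_right _ n)⟩
          - p ⟨min a n, Nat.lt_succ_of_le (min_le_right _ n)⟩) := by
    funext x; exact polyCurve_eq_sum n p x
  rw [this]
  apply continuous_const.add
  apply continuous_finset_sum
  intro a _
  apply Continuous.mul _ continuous_const
  apply Continuous.min _ continuous_const
  apply Continuous.max _ continuous_const
  exact (continuous_subtype_val.mul continuous_const).sub continuous_const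

/-- Affine interpolation property of `polyCurve` on a single edge. -/
lemma polyCurve_affine {n : ℕ} (p : Fin (n+1) → ℝ) {a : ℕ} (ha : a < n)
    (x1 x2 w : unitInterval) {μ : ℝ} (hμ0 : 0 ≤ μ) (hμ1 : μ ≤ 1)
    (h1 : (a:ℝ) ≤ (x1:ℝ) * n) (h2 : (x2:ℝ) * n ≤ a + 1) (h12 : (x1:ℝ) ≤ (x2:ℝ))
    (hw : (w:ℝ) = (1-μ) * x1 + μ * x2) :
    polyCurve n p w = (1-μ) * polyCurve n p x1 + μ * polyCurve n p x2 := by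
  have hn0 : (0:ℝ) ≤ n := by positivity
  have h1' : (x1:ℝ) * n ≤ a + 1 := le_trans (mul_le_mul_of_nonneg_right h12 hn0) h2
  have h2' : (a:ℝ) ≤ (x2:ℝ) * n := le_trans h1 (mul_le_mul_of_nonneg_right h12 hn0)
  have hwn : (w:ℝ) * n = (1-μ) * ((x1:ℝ)*n) + μ * ((x2:ℝ)*n) := by rw [hw]; ring
  have hwa : (a:ℝ) ≤ (w:ℝ) * n := by nlinarith
  have hwb : (w:ℝ) * n ≤ a + 1 := by nlinarith
  rw [polyCurve_edge p ha w hwa hwb, polyCurve_edge p ha x1 h1 h1',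
    polyCurve_edge p ha x2 h2' h2, hwn]
  ring
lemma monoSurj_zero {f : unitInterval → unitInterval} (hm : Monotone f)
    (hs : Function.Surjective f) : f 0 = 0 := by
  obtain ⟨x, hx⟩ := hs 0
  have h1 : f 0 ≤ f x := hm (by
    rw [← Subtype.coe_le_coe]
    exact unit_coe_nonneg x)
  rw [hx] at h1
  apply le_antisymm h1
  rw [← Subtype.coe_le_coe]
  exact unit_coe_nonneg (f 0)

lemma monoSurj_one {f : unitInterval → unitInterval} (hm : Monotone f)
    (hs : Function.Surjective f) : f 1 = 1 := by
  obtain ⟨x, hx⟩ := hs 1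
  have h1 : f x ≤ f 1 := hm (by
    rw [← Subtype.coe_le_coe]
    exact unit_coe_le_one x)
  rw [hx] at h1
  apply le_antisymm _ h1
  rw [← Subtype.coe_le_coe]
  exact unit_coe_le_one (f 1)

lemma frechet_bddBelow (A B : unitInterval → ℝ) :
    BddBelow {r : ℝ | ∃ f g : unitInterval → unitInterval,
      Continuous f ∧ Monotone f ∧ Function.Surjective f ∧
      Continuous g ∧ Monotone g ∧ Function.Surjective g ∧
      ∀ t, dist (A (f t)) (B (g t)) ≤ r} := by
  refine ⟨0, fun r hr => ?_⟩
  obtain ⟨f, g, _, _, _, _, _, _, hb⟩ := hr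
  exact le_trans dist_nonneg (hb 0)

/-- Extract a near-optimal monotone matching from a Fréchet distance bound. -/
lemma exists_matching {A B : unitInterval → ℝ} (hA : Continuous A) (hB : Continuous B)
    {c ε : ℝ} (hc : frechetDist A B ≤ c) (hε : 0 < ε) :
    ∃ f g : unitInterval → unitInterval,
      Continuous f ∧ Monotone f ∧ Function.Surjective f ∧
      Continuous g ∧ Monotone g ∧ Function.Surjective g ∧
      ∀ t, dist (A (f t)) (B (g t)) ≤ c + ε := by
  set S := {r : ℝ | ∃ f g : unitInterval → unitInterval,
      Continuous f ∧ Monotone f ∧ Function.Surjective f ∧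
      Continuous g ∧ Monotone g ∧ Function.Surjective g ∧
      ∀ t, dist (A (f t)) (B (g t)) ≤ r} with hS
  have hcont : Continuous (fun t : unitInterval => dist (A t) (B t)) :=
    (hA.dist hB)
  obtain ⟨t0, _, ht0⟩ := IsCompact.exists_isMaxOn isCompact_univ Set.univ_nonempty
    hcont.continuousOn
  have hne : S.Nonempty := by
    refine ⟨dist (A t0) (B t0), id, id, continuous_id, monotone_id,
      Function.surjective_id, continuous_id, monotone_id, Function.surjective_id, ?_⟩
    intro t
    exact ht0 (Set.mem_univ t)
  have hlt : sInf S < c + ε := lt_of_le_of_lt hc (by linarith)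
  obtain ⟨r, hrS, hrlt⟩ := (csInf_lt_iff (frechet_bddBelow A B) hne).mp hlt
  obtain ⟨f, g, h1, h2, h3, h4, h5, h6, hb⟩ := hrS
  exact ⟨f, g, h1, h2, h3, h4, h5, h6, fun t => le_trans (hb t) (le_of_lt hrlt)⟩

lemma segCurve_continuous (a b : ℝ) : Continuous (segCurve a b) := by
  have h : segCurve a b = fun t : unitInterval => (1 - (t:ℝ)) * a + (t:ℝ) * b := by
    funext t; simp [segCurve, smul_eq_mul]
  rw [h]
  exact ((continuous_const.sub continuous_subtype_val).mul continuous_const).add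
    (continuous_subtype_val.mul continuous_const)

lemma subcurve_continuous {P : unitInterval → ℝ} (hP : Continuous P) (a b : unitInterval) :
    Continuous (subcurve P a b) := by
  apply hP.comp
  apply Continuous.subtype_mk
  exact ((continuous_const.sub continuous_subtype_val).mul continuous_const).add
    (continuous_subtype_val.mul continuous_const)
lemma edge_facts {n : ℕ} (hn : 1 ≤ n) (x : unitInterval) :
    min (Nat.floor ((x:ℝ)*n)) (n-1) < n ∧
    ((min (Nat.floor ((x:ℝ)*n)) (n-1) : ℕ) : ℝ) ≤ (x:ℝ)*n ∧
    (x:ℝ)*n ≤ ((min (Nat.floor ((x:ℝ)*n)) (n-1) : ℕ) : ℝ) + 1 := by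
  set X : ℝ := (x:ℝ) * n with hX
  have hX0 : 0 ≤ X := mul_nonneg (unit_coe_nonneg x) (Nat.cast_nonneg n)
  have hXn : X ≤ n := by
    rw [hX]
    calc (x:ℝ) * n ≤ 1 * n := by
          apply mul_le_mul_of_nonneg_right (unit_coe_le_one x) (by positivity)
      _ = n := one_mul _
  set a : ℕ := min (Nat.floor X) (n-1) with hadef
  have hcast : ((n-1 : ℕ):ℝ) = (n:ℝ) - 1 := by
    rw [Nat.cast_sub (by omega : 1 ≤ n), Nat.cast_one]
  refine ⟨by omega, ?_, ?_⟩
  · calc (a:ℝ) ≤ (Nat.floor X : ℝ) := by exact_mod_cast min_le_left _ _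
      _ ≤ X := Nat.floor_le hX0
  · rcases Nat.lt_or_ge (Nat.floor X) (n-1) with h | h
    · have ha' : a = Nat.floor X := by omega
      rw [ha']
      exact le_of_lt (Nat.lt_floor_add_one X)
    · have ha' : a = n - 1 := by omega
      rw [ha', hcast]; linarith

lemma vparam_zero {n : ℕ} : vparam n 0 = 0 := by
  apply Subtype.ext
  simp [vparam]

lemma vparam_last {n : ℕ} (hn : 1 ≤ n) : vparam n (Fin.last n) = 1 := by
  apply Subtype.ext
  simp only [vparam, Fin.val_last]
  have : (n:ℝ) ≠ 0 := by positivity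
  field_simp
  simp

/-- A monotone chain of matched parameter pairs covering all vertices of both
polygonal curves with pointwise distance `≤ r` bounds their Fréchet distance. -/
lemma frechet_le_of_chain {m k N : ℕ} (hm : 1 ≤ m) (hk : 1 ≤ k) (hN : 1 ≤ N)
    (p : Fin (m+1) → ℝ) (q : Fin (k+1) → ℝ) (u v : Fin (N+1) → unitInterval)
    (hu : Monotone u) (hv : Monotone v)
    (hu0 : u 0 = 0) (hu1 : u (Fin.last N) = 1)
    (hv0 : v 0 = 0) (hv1 : v (Fin.last N) = 1)
    (hucov : ∀ a : Fin (m+1), ∃ s, u s = vparam m a)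
    (hvcov : ∀ b : Fin (k+1), ∃ s, v s = vparam k b)
    {r : ℝ} (hr : ∀ s, |polyCurve m p (u s) - polyCurve k q (v s)| ≤ r) :
    frechetDist (polyCurve m p) (polyCurve k q) ≤ r := by
  classical
  set u' : Fin (N+1) → ℝ := fun s => (u s : ℝ) with hu'
  set v' : Fin (N+1) → ℝ := fun s => (v s : ℝ) with hv'
  have hu'mono : Monotone u' := fun s s' h => Subtype.coe_le_coe.mpr (hu h)
  have hv'mono : Monotone v' := fun s s' h => Subtype.coe_le_coe.mpr (hv h)
  have hF0 : polyCurve N u' 0 = 0 := by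
    have h0 : (0 : unitInterval) = vparam N 0 := by rw [vparam_zero]
    rw [h0, polyCurve_vparam hN u' 0]
    show (u 0 : ℝ) = 0
    rw [hu0]; simp
  have hF1 : polyCurve N u' 1 = 1 := by
    have h1 : (1 : unitInterval) = vparam N (Fin.last N) := by rw [vparam_last hN]
    rw [h1, polyCurve_vparam hN u' (Fin.last N)]
    show (u (Fin.last N) : ℝ) = 1
    rw [hu1]; simp
  have hG0 : polyCurve N v' 0 = 0 := by
    have h0 : (0 : unitInterval) = vparam N 0 := by rw [vparam_zero]
    rw [h0, polyCurve_vparam hN v' 0]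
    show (v 0 : ℝ) = 0
    rw [hv0]; simp
  have hG1 : polyCurve N v' 1 = 1 := by
    have h1 : (1 : unitInterval) = vparam N (Fin.last N) := by rw [vparam_last hN]
    rw [h1, polyCurve_vparam hN v' (Fin.last N)]
    show (v (Fin.last N) : ℝ) = 1
    rw [hv1]; simp
  have hθ0 : ∀ θ : unitInterval, (0:unitInterval) ≤ θ := by
    intro θ; rw [← Subtype.coe_le_coe]; simpa using unit_coe_nonneg θ
  have hθ1 : ∀ θ : unitInterval, θ ≤ (1:unitInterval) := by
    intro θ; rw [← Subtype.coe_le_coe]; simpa using unit_coe_le_one θ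
  have hFmem : ∀ θ, polyCurve N u' θ ∈ unitInterval := by
    intro θ
    constructor
    · rw [← hF0]; exact polyCurve_monotone hu'mono (hθ0 θ)
    · rw [← hF1]; exact polyCurve_monotone hu'mono (hθ1 θ)
  have hGmem : ∀ θ, polyCurve N v' θ ∈ unitInterval := by
    intro θ
    constructor
    · rw [← hG0]; exact polyCurve_monotone hv'mono (hθ0 θ)
    · rw [← hG1]; exact polyCurve_monotone hv'mono (hθ1 θ)
  set f : unitInterval → unitInterval := fun θ => ⟨polyCurve N u' θ, hFmem θ⟩ with hf
  set g : unitInterval → unitInterval := fun θ => ⟨polyCurve N v' θ, hGmem θ⟩ with hg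
  have hfc : Continuous f := (polyCurve_continuous u').subtype_mk _
  have hgc : Continuous g := (polyCurve_continuous v').subtype_mk _
  have hfm : Monotone f := fun a b h => Subtype.mk_le_mk.mpr (polyCurve_monotone hu'mono h)
  have hgm : Monotone g := fun a b h => Subtype.mk_le_mk.mpr (polyCurve_monotone hv'mono h)
  have hfs : Function.Surjective f := by
    intro y
    have hsub := intermediate_value_univ (0:unitInterval) (1:unitInterval)
      (polyCurve_continuous u')
    have hy : (y:ℝ) ∈ Set.Icc (polyCurve N u' 0) (polyCurve N u' 1) := by
      rw [hF0, hF1]; exact y.2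
    obtain ⟨θ, hθ⟩ := hsub hy
    exact ⟨θ, Subtype.ext hθ⟩
  have hgs : Function.Surjective g := by
    intro y
    have hsub := intermediate_value_univ (0:unitInterval) (1:unitInterval)
      (polyCurve_continuous v')
    have hy : (y:ℝ) ∈ Set.Icc (polyCurve N v' 0) (polyCurve N v' 1) := by
      rw [hG0, hG1]; exact y.2
    obtain ⟨θ, hθ⟩ := hsub hy
    exact ⟨θ, Subtype.ext hθ⟩
  -- key pointwise bound
  have hbound : ∀ θ, dist (polyCurve m p (f θ)) (polyCurve k q (g θ)) ≤ r := by
    intro θ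
    rw [Real.dist_eq]
    obtain ⟨hs0N, hsle, hsge⟩ := edge_facts hN θ
    set s0 : ℕ := min (Nat.floor ((θ:ℝ)*N)) (N-1) with hs0
    set μ : ℝ := (θ:ℝ)*N - s0 with hμ
    have hμ0 : 0 ≤ μ := by rw [hμ]; linarith
    have hμ1 : μ ≤ 1 := by rw [hμ]; linarith
    have hfθ : (f θ : ℝ) = (1-μ) * (u ⟨s0, by omega⟩ : ℝ) + μ * (u ⟨s0+1, by omega⟩ : ℝ) := by
      show polyCurve N u' θ = _
      rw [polyCurve_edge u' hs0N θ hsle hsge]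
    have hgθ : (g θ : ℝ) = (1-μ) * (v ⟨s0, by omega⟩ : ℝ) + μ * (v ⟨s0+1, by omega⟩ : ℝ) := by
      show polyCurve N v' θ = _
      rw [polyCurve_edge v' hs0N θ hsle hsge]
    -- one edge of the P'-side contains [u s0, u (s0+1)]
    have key : ∀ (mm : ℕ) (hmm : 1 ≤ mm) (pp : Fin (mm+1) → ℝ) (w : Fin (N+1) → unitInterval),
        Monotone w → (∀ a : Fin (mm+1), ∃ s, w s = vparam mm a) →
        ∀ (z : unitInterval), (z:ℝ) = (1-μ) * (w ⟨s0, by omega⟩ : ℝ) + μ * (w ⟨s0+1, by omega⟩ : ℝ) →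
        polyCurve mm pp z
          = (1-μ) * polyCurve mm pp (w ⟨s0, by omega⟩) + μ * polyCurve mm pp (w ⟨s0+1, by omega⟩) := by
      intro mm hmm pp w hw hwcov z hz
      set ws : unitInterval := w ⟨s0, by omega⟩ with hws
      set ws1 : unitInterval := w ⟨s0+1, by omega⟩ with hws1
      have hwsle : ws ≤ ws1 := hw (by rw [Fin.mk_le_mk]; omega)
      obtain ⟨haN, hale, _⟩ := edge_facts hmm ws
      set a : ℕ := min (Nat.floor ((ws:ℝ)*mm)) (mm-1) with ha
      have hup : (ws1:ℝ)*mm ≤ a + 1 := by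
        by_contra hcon
        push_neg at hcon
        rcases Nat.lt_or_ge (a+1) mm with hc1 | hc1
        · obtain ⟨s', hs'⟩ := hwcov ⟨a+1, by omega⟩
          have hvp : ((vparam mm ⟨a+1, by omega⟩ : ℝ)) = ((a:ℝ)+1) / mm := by
            simp [vparam]
          have hmm0 : (0:ℝ) < mm := by exact_mod_cast hmm
          have hlt : w s' < ws1 := by
            rw [← Subtype.coe_lt_coe, hs', hvp]
            rw [div_lt_iff₀ hmm0]
            linarith
          have hs'le : s' ≤ ⟨s0, by omega⟩ := by
            by_contra hcon2
            push_neg at hcon2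
            have : (⟨s0+1, by omega⟩ : Fin (N+1)) ≤ s' := by
              rw [Fin.le_def] at *
              simp only [Fin.lt_def] at hcon2
              simp at *
              omega
            exact absurd (hw this) (not_le.mpr hlt)
          have : ((a:ℝ)+1)/mm ≤ (ws:ℝ) := by
            rw [← hvp, ← hs']
            exact Subtype.coe_le_coe.mpr (hw hs'le)
          have h2 : (a:ℝ)+1 ≤ (ws:ℝ)*mm := by
            rw [div_le_iff₀ hmm0] at this
            linarith
          have h3 : a+1 ≤ Nat.floor ((ws:ℝ)*mm) := by
            apply Nat.le_floor
            push_cast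
            linarith
          omega
        · have ha' : a = mm - 1 := by omega
          have : (ws1:ℝ)*mm ≤ mm := by
            calc (ws1:ℝ)*mm ≤ 1*mm := by
                  apply mul_le_mul_of_nonneg_right (unit_coe_le_one ws1) (by positivity)
              _ = mm := one_mul _
          have hcast : ((mm-1 : ℕ):ℝ) = (mm:ℝ) - 1 := by
            rw [Nat.cast_sub (by omega : 1 ≤ mm), Nat.cast_one]
          rw [ha', hcast] at hcon
          linarith
      exact polyCurve_affine pp haN ws ws1 z hμ0 hμ1 hale hup
        (Subtype.coe_le_coe.mpr hwsle) hz
    have hA := key m hm p u hu hucov (f θ) hfθ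
    have hB := key k hk q v hv hvcov (g θ) hgθ
    rw [hA, hB]
    have h1 := hr ⟨s0, by omega⟩
    have h2 := hr ⟨s0+1, by omega⟩
    calc |((1-μ) * polyCurve m p (u ⟨s0, by omega⟩) + μ * polyCurve m p (u ⟨s0+1, by omega⟩))
        - ((1-μ) * polyCurve k q (v ⟨s0, by omega⟩) + μ * polyCurve k q (v ⟨s0+1, by omega⟩))|
        = |(1-μ) * (polyCurve m p (u ⟨s0, by omega⟩) - polyCurve k q (v ⟨s0, by omega⟩))
          + μ * (polyCurve m p (u ⟨s0+1, by omega⟩) - polyCurve k q (v ⟨s0+1, by omega⟩))| := by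
          ring_nf
      _ ≤ |(1-μ) * (polyCurve m p (u ⟨s0, by omega⟩) - polyCurve k q (v ⟨s0, by omega⟩))|
          + |μ * (polyCurve m p (u ⟨s0+1, by omega⟩) - polyCurve k q (v ⟨s0+1, by omega⟩))| :=
          abs_add_le _ _
      _ ≤ (1-μ) * r + μ * r := by
          rw [abs_mul, abs_mul, abs_of_nonneg (by linarith : (0:ℝ) ≤ 1 - μ), abs_of_nonneg hμ0]
          exact add_le_add (mul_le_mul_of_nonneg_left h1 (by linarith))
            (mul_le_mul_of_nonneg_left h2 hμ0)
      _ = r := by ring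
  apply csInf_le (frechet_bddBelow _ _)
  exact ⟨f, g, hfc, hfm, hfs, hgc, hgm, hgs, hbound⟩
lemma unit_zero_le (x : unitInterval) : (0:unitInterval) ≤ x := by
  rw [← Subtype.coe_le_coe]; simpa using unit_coe_nonneg x

lemma unit_le_one' (x : unitInterval) : x ≤ (1:unitInterval) := by
  rw [← Subtype.coe_le_coe]; simpa using unit_coe_le_one x

lemma vparam_coe (n : ℕ) (i : Fin (n+1)) : (vparam n i : ℝ) = ((i:ℕ):ℝ) / n := rfl

/-- Given per-edge locality bounds, there is a monotone map sending each parameter of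
`P` to a parameter of the polygonal simplification, matching vertices exactly and
moving values by at most `δ' + ε`. -/
lemma exists_simpl_fun {δ' ε : ℝ} (hδ' : 0 ≤ δ') (hε : 0 < ε) {P : unitInterval → ℝ}
    (hPc : Continuous P)
    {m : ℕ} (hm : 1 ≤ m) {t : Fin (m+1) → unitInterval} (ht : StrictMono t)
    (ht0 : t 0 = 0) (ht1 : t (Fin.last m) = 1)
    (hloc : ∀ i : Fin m, frechetDist (segCurve (P (t i.castSucc)) (P (t i.succ)))
      (subcurve P (t i.castSucc) (t i.succ)) ≤ δ') :
    ∃ U : unitInterval → unitInterval, Monotone U ∧ (∀ i, U (t i) = vparam m i) ∧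
      ∀ x, |polyCurve m (fun i => P (t i)) (U x) - P x| ≤ δ' + ε := by
  classical
  have hm0 : (0:ℝ) < m := by exact_mod_cast hm
  -- per-edge matchings
  have hexm : ∀ a : Fin m, ∃ f g : unitInterval → unitInterval,
      Continuous f ∧ Monotone f ∧ Function.Surjective f ∧
      Continuous g ∧ Monotone g ∧ Function.Surjective g ∧
      ∀ τ, dist (segCurve (P (t a.castSucc)) (P (t a.succ)) (f τ))
        (subcurve P (t a.castSucc) (t a.succ) (g τ)) ≤ δ' + ε :=
    fun a => exists_matching (segCurve_continuous _ _) (subcurve_continuous hPc _ _)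
      (hloc a) hε
  choose fE gE hfc hfm hfs hgc hgm hgs hEb using hexm
  -- edge index of a parameter
  have hne : ∀ x : unitInterval,
      (Finset.univ.filter (fun a : Fin m => t a.castSucc ≤ x)).Nonempty := by
    intro x
    refine ⟨⟨0, hm⟩, ?_⟩
    rw [Finset.mem_filter]
    refine ⟨Finset.mem_univ _, ?_⟩
    have h0 : (⟨0, hm⟩ : Fin m).castSucc = (0 : Fin (m+1)) := by
      apply Fin.ext; simp
    rw [h0, ht0]
    exact unit_zero_le x
  set edg : unitInterval → Fin m :=
    fun x => (Finset.univ.filter (fun a : Fin m => t a.castSucc ≤ x)).max' (hne x) with hedg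
  have hedg1 : ∀ x, t (edg x).castSucc ≤ x := by
    intro x
    have := Finset.max'_mem _ (hne x)
    rw [Finset.mem_filter] at this
    exact this.2
  have hedg2 : ∀ x, x ≤ t (edg x).succ := by
    intro x
    by_contra hcon
    push_neg at hcon
    rcases Nat.lt_or_ge ((edg x : ℕ) + 1) m with h2 | h2
    · set b : Fin m := ⟨(edg x : ℕ) + 1, h2⟩ with hb
      have hbc : b.castSucc = (edg x).succ := by apply Fin.ext; simp [hb]
      have hbf : b ∈ Finset.univ.filter (fun a : Fin m => t a.castSucc ≤ x) := by
        rw [Finset.mem_filter]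
        exact ⟨Finset.mem_univ _, by rw [hbc]; exact le_of_lt hcon⟩
      have hble : b ≤ edg x := Finset.le_max' _ b hbf
      rw [Fin.le_def] at hble
      simp only [hb] at hble
      omega
    · have hlast : (edg x).succ = Fin.last m := by
        apply Fin.ext; simp; omega
      rw [hlast, ht1] at hcon
      exact absurd (unit_le_one' x) (not_le.mpr hcon)
  have hedgmono : ∀ {x y : unitInterval}, x ≤ y → edg x ≤ edg y := by
    intro x y hxy
    apply Finset.max'_subset
    intro a ha
    rw [Finset.mem_filter] at ha ⊢
    exact ⟨Finset.mem_univ _, le_trans ha.2 hxy⟩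
  have hden : ∀ a : Fin m, (0:ℝ) < (t a.succ : ℝ) - (t a.castSucc : ℝ) := by
    intro a
    rw [sub_pos]
    exact Subtype.coe_lt_coe.mpr (ht (Fin.castSucc_lt_succ : a.castSucc < a.succ))
  -- local parameter within an edge
  have hlammem : ∀ x : unitInterval,
      ((x:ℝ) - (t (edg x).castSucc : ℝ)) / ((t (edg x).succ : ℝ) - (t (edg x).castSucc : ℝ))
        ∈ unitInterval := by
    intro x
    constructor
    · apply div_nonneg _ (le_of_lt (hden (edg x)))
      rw [sub_nonneg]
      exact Subtype.coe_le_coe.mpr (hedg1 x)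
    · rw [div_le_one (hden (edg x))]
      have := Subtype.coe_le_coe.mpr (hedg2 x)
      linarith
  set lamI : unitInterval → unitInterval :=
    fun x => ⟨_, hlammem x⟩ with hlamI
  set pick : Fin m → unitInterval → unitInterval := fun a l => (hgs a l).choose with hpickdef
  have hpick : ∀ a l, gE a (pick a l) = l := fun a l => (hgs a l).choose_spec
  set Uval : unitInterval → ℝ :=
    fun x => (((edg x : ℕ) : ℝ) + (fE (edg x) (pick (edg x) (lamI x)) : ℝ)) / m with hUval
  have hedgcast : ∀ x, ((edg x : ℕ) : ℝ) ≤ (m:ℝ) - 1 := by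
    intro x
    have h1 : (edg x : ℕ) ≤ m - 1 := by omega
    have h2 : ((edg x : ℕ) : ℝ) ≤ ((m - 1 : ℕ) : ℝ) := by exact_mod_cast h1
    rw [Nat.cast_sub (by omega : 1 ≤ m), Nat.cast_one] at h2
    exact h2
  have hUmem : ∀ x : unitInterval, Uval x ∈ unitInterval := by
    intro x
    have hc0 := unit_coe_nonneg (fE (edg x) (pick (edg x) (lamI x)))
    have hc1 := unit_coe_le_one (fE (edg x) (pick (edg x) (lamI x)))
    have he := hedgcast x
    constructor
    · apply div_nonneg _ (le_of_lt hm0)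
      positivity
    · rw [div_le_one hm0]
      linarith
  set U : unitInterval → unitInterval := fun x =>
    if h : ∃ i : Fin (m+1), t i = x then vparam m h.choose
    else ⟨Uval x, hUmem x⟩ with hU
  have hUvert : ∀ i, U (t i) = vparam m i := by
    intro i
    have h : ∃ j : Fin (m+1), t j = t i := ⟨i, rfl⟩
    have heq : U (t i) = vparam m h.choose := by rw [hU]; exact dif_pos h
    rw [heq]
    congr 1
    exact ht.injective h.choose_spec
  -- pick-monotonicity within an edge
  have hpm : ∀ (a : Fin m) (l l' : unitInterval), l ≤ l' →
      (fE a (pick a l) : ℝ) ≤ (fE a (pick a l') : ℝ) := by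
    intro a l l' hll
    rcases eq_or_lt_of_le hll with rfl | hll'
    · exact le_rfl
    · have hpl : pick a l < pick a l' := by
        by_contra hcon
        push_neg at hcon
        have hmono := hgm a hcon
        rw [hpick, hpick] at hmono
        exact absurd hll' (not_lt.mpr hmono)
      exact Subtype.coe_le_coe.mpr (hfm a (le_of_lt hpl))
  refine ⟨U, ?_, hUvert, ?_⟩
  · -- monotonicity
    intro x y hxy
    rcases eq_or_lt_of_le hxy with rfl | hlt
    · exact le_rfl
    by_cases hx : ∃ i : Fin (m+1), t i = x
    · by_cases hy : ∃ j : Fin (m+1), t j = y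
      · have ex : U x = vparam m hx.choose := by rw [hU]; exact dif_pos hx
        have ey : U y = vparam m hy.choose := by rw [hU]; exact dif_pos hy
        rw [ex, ey, ← Subtype.coe_le_coe, vparam_coe, vparam_coe]
        have hle : hx.choose ≤ hy.choose := by
          apply (ht.le_iff_le).mp
          rw [hx.choose_spec, hy.choose_spec]
          exact hxy
        have hnum : ((hx.choose : ℕ):ℝ) ≤ ((hy.choose : ℕ):ℝ) := by exact_mod_cast hle
        exact div_le_div_of_nonneg_right hnum hm0.le
      · -- x vertex, y not
        have ex : U x = vparam m hx.choose := by rw [hU]; exact dif_pos hx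
        have ey : U y = ⟨Uval y, hUmem y⟩ := by rw [hU]; exact dif_neg hy
        have him : ((hx.choose : Fin (m+1)) : ℕ) < m := by
          by_contra hcon
          have h1 : ((hx.choose : Fin (m+1)) : ℕ) = m := by
            have := (hx.choose : Fin (m+1)).isLt; omega
          have h2 : (hx.choose : Fin (m+1)) = Fin.last m := Fin.ext h1
          have h3 : x = 1 := by rw [← hx.choose_spec, h2, ht1]
          have h4 : y = 1 := le_antisymm (unit_le_one' y) (h3 ▸ hxy)
          exact hy ⟨Fin.last m, by rw [ht1, h4]⟩
        set b : Fin m := ⟨((hx.choose : Fin (m+1)) : ℕ), him⟩ with hb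
        have hbc : b.castSucc = hx.choose := by apply Fin.ext; simp [hb]
        have hbf : b ∈ Finset.univ.filter (fun a : Fin m => t a.castSucc ≤ y) := by
          rw [Finset.mem_filter]
          refine ⟨Finset.mem_univ _, ?_⟩
          rw [hbc, hx.choose_spec]
          exact hxy
        have hbe : (b:ℕ) ≤ (edg y : ℕ) := Finset.le_max' _ b hbf
        rw [ex, ey, ← Subtype.coe_le_coe, vparam_coe]
        show _ ≤ Uval y
        rw [hUval]
        have hc0 := unit_coe_nonneg (fE (edg y) (pick (edg y) (lamI y)))
        have hι : ((hx.choose : Fin (m+1)):ℕ) ≤ (edg y : ℕ) := hbe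
        have hcast : (((hx.choose : Fin (m+1)):ℕ):ℝ) ≤ ((edg y : ℕ):ℝ) := by exact_mod_cast hι
        exact div_le_div_of_nonneg_right (by linarith) hm0.le
    · by_cases hy : ∃ j : Fin (m+1), t j = y
      · -- x not vertex, y vertex
        have ex : U x = ⟨Uval x, hUmem x⟩ := by rw [hU]; exact dif_neg hx
        have ey : U y = vparam m hy.choose := by rw [hU]; exact dif_pos hy
        have hlt2 : t (edg x).castSucc < x := by
          rcases eq_or_lt_of_le (hedg1 x) with heq | h
          · exact absurd ⟨(edg x).castSucc, heq⟩ hx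
          · exact h
        have hlt3 : t (edg x).castSucc < t hy.choose := by
          rw [hy.choose_spec]
          exact lt_of_lt_of_le hlt2 hxy
        have hej : ((edg x:ℕ)) + 1 ≤ ((hy.choose : Fin (m+1)):ℕ) := by
          have := ht.lt_iff_lt.mp hlt3
          simp only [Fin.lt_def, Fin.coe_castSucc] at this
          omega
        rw [ex, ey, ← Subtype.coe_le_coe, vparam_coe]
        show Uval x ≤ _
        rw [hUval]
        have hc1 := unit_coe_le_one (fE (edg x) (pick (edg x) (lamI x)))
        have hcast : ((edg x:ℕ):ℝ) + 1 ≤ (((hy.choose : Fin (m+1)):ℕ):ℝ) := by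
          exact_mod_cast hej
        exact div_le_div_of_nonneg_right (by linarith) hm0.le
      · -- neither vertex
        have ex : U x = ⟨Uval x, hUmem x⟩ := by rw [hU]; exact dif_neg hx
        have ey : U y = ⟨Uval y, hUmem y⟩ := by rw [hU]; exact dif_neg hy
        rw [ex, ey, ← Subtype.coe_le_coe]
        show Uval x ≤ Uval y
        rcases lt_or_eq_of_le (hedgmono (le_of_lt hlt)) with he | he
        · have he' : (edg x:ℕ) + 1 ≤ (edg y:ℕ) := he
          have hcast : ((edg x:ℕ):ℝ) + 1 ≤ ((edg y:ℕ):ℝ) := by exact_mod_cast he'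
          have hc1 := unit_coe_le_one (fE (edg x) (pick (edg x) (lamI x)))
          have hc0 := unit_coe_nonneg (fE (edg y) (pick (edg y) (lamI y)))
          rw [hUval]
          exact div_le_div_of_nonneg_right (by linarith) hm0.le
        · -- same edge
          have hlam : lamI x ≤ lamI y := by
            rw [← Subtype.coe_le_coe]
            show ((x:ℝ) - (t (edg x).castSucc : ℝ))
                / ((t (edg x).succ : ℝ) - (t (edg x).castSucc : ℝ)) ≤
              ((y:ℝ) - (t (edg y).castSucc : ℝ))
                / ((t (edg y).succ : ℝ) - (t (edg y).castSucc : ℝ))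
            rw [← he]
            have hnum : (x:ℝ) - (t (edg x).castSucc : ℝ) ≤ (y:ℝ) - (t (edg x).castSucc : ℝ) := by
              have hxy' : (x:ℝ) ≤ (y:ℝ) := Subtype.coe_le_coe.mpr (le_of_lt hlt)
              linarith
            exact div_le_div_of_nonneg_right hnum (hden (edg x)).le
          have hfle := hpm (edg x) (lamI x) (lamI y) hlam
          simp only [hUval]
          rw [← he]
          exact div_le_div_of_nonneg_right (by linarith) hm0.le
  · -- distance bound
    intro x
    by_cases hx : ∃ i : Fin (m+1), t i = x
    · have ex : U x = vparam m hx.choose := by rw [hU]; exact dif_pos hx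
      rw [ex, polyCurve_vparam hm _ hx.choose, hx.choose_spec, sub_self, abs_zero]
      linarith
    · have ex : U x = ⟨Uval x, hUmem x⟩ := by rw [hU]; exact dif_neg hx
      set a : Fin m := edg x with ha
      set τ : unitInterval := pick a (lamI x) with hτ
      set c : ℝ := (fE a τ : ℝ) with hc
      have hc0 := unit_coe_nonneg (fE a τ)
      have hc1 := unit_coe_le_one (fE a τ)
      have hval : ((U x : ℝ)) * m = ((a:ℕ):ℝ) + c := by
        rw [ex]
        show ((((a:ℕ):ℝ) + c) / m) * m = ((a:ℕ):ℝ) + c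
        field_simp
      have ham : ((a:ℕ)) < m := a.isLt
      have h1 : (((a:ℕ)):ℝ) ≤ ((U x : ℝ)) * m := by rw [hval]; linarith
      have h2 : ((U x : ℝ)) * m ≤ ((a:ℕ):ℝ) + 1 := by rw [hval]; linarith
      rw [polyCurve_edge (fun i => P (t i)) ham (U x) h1 h2, hval]
      have hfin1 : (⟨(a:ℕ), by omega⟩ : Fin (m+1)) = a.castSucc := by apply Fin.ext; simp
      have hfin2 : (⟨(a:ℕ)+1, by omega⟩ : Fin (m+1)) = a.succ := by apply Fin.ext; simp
      rw [hfin1, hfin2]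
      have hseg : (1 - ((((a:ℕ)):ℝ) + c - ((a:ℕ):ℝ))) * P (t a.castSucc)
          + ((((a:ℕ)):ℝ) + c - ((a:ℕ):ℝ)) * P (t a.succ)
          = segCurve (P (t a.castSucc)) (P (t a.succ)) (fE a τ) := by
        simp only [segCurve, smul_eq_mul, ← hc]
        ring
      rw [hseg]
      have hsub : subcurve P (t a.castSucc) (t a.succ) (gE a τ) = P x := by
        rw [hpick]
        show P _ = P x
        congr 1
        apply Subtype.ext
        show (1 - (lamI x : ℝ)) * (t a.castSucc : ℝ) + (lamI x : ℝ) * (t a.succ : ℝ) = (x:ℝ)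
        show (1 - ((x:ℝ) - (t (edg x).castSucc : ℝ))
            / ((t (edg x).succ : ℝ) - (t (edg x).castSucc : ℝ))) * (t a.castSucc : ℝ)
          + (((x:ℝ) - (t (edg x).castSucc : ℝ))
            / ((t (edg x).succ : ℝ) - (t (edg x).castSucc : ℝ))) * (t a.succ : ℝ) = (x:ℝ)
        have hd := hden a
        rw [← ha]
        field_simp
        ring
      have hfin := hEb a τ
      rw [Real.dist_eq, hsub] at hfin
      exact hfin

/-- If `d_F(P, Q) ≤ δ`, `P'` is a `δ`-signature of `P` and `Q'` is a
`2δ`-signature of `Q`, then `d_F(P', Q') ≤ 3δ`. -/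
theorem frechetDist_signatures_le_three (δ : ℝ) (hδ : 0 < δ)
    (P Q P' Q' : unitInterval → ℝ) (hPc : Continuous P) (hQc : Continuous Q)
    (hPQ : frechetDist P Q ≤ δ)
    (hP' : IsSignature δ P P') (hQ' : IsSignature (2 * δ) Q Q') :
    frechetDist P' Q' ≤ 3 * δ := by
  classical
  obtain ⟨m, t, ⟨htmono, ht0, ht1, hlocP, -, -, -⟩, rfl⟩ := hP'
  obtain ⟨k, s, ⟨hsmono, hs0, hs1, hlocQ, -, -, -⟩, rfl⟩ := hQ'
  have hm : 1 ≤ m := by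
    by_contra h
    have hm0 : m = 0 := by omega
    subst hm0
    have h01 : (0 : unitInterval) = 1 := by
      rw [← ht0, ← ht1]; rfl
    have := congrArg Subtype.val h01
    norm_num at this
  have hk : 1 ≤ k := by
    by_contra h
    have hk0 : k = 0 := by omega
    subst hk0
    have h01 : (0 : unitInterval) = 1 := by
      rw [← hs0, ← hs1]; rfl
    have := congrArg Subtype.val h01
    norm_num at this
  apply le_of_forall_pos_le_add
  intro ε hε
  have hε2 : 0 < ε/2 := by linarith
  obtain ⟨φ, ψ, -, hφm, hφs, -, hψm, hψs, hPQb⟩ := exists_matching hPc hQc hPQ hε2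
  obtain ⟨U, hUm, hUv, hUb⟩ := exists_simpl_fun hδ.le hε2 hPc hm htmono ht0 ht1 hlocP
  obtain ⟨V, hVm, hVv, hVb⟩ :=
    exists_simpl_fun (by linarith : (0:ℝ) ≤ 2*δ) hε2 hQc hk hsmono hs0 hs1 hlocQ
  -- sample times for the vertices of each signature
  set θP : Fin (m+1) → unitInterval := fun i =>
    if i = 0 then 0 else if i = Fin.last m then 1 else (hφs (t i)).choose with hθP
  have hθP0 : θP 0 = 0 := by simp [hθP]
  have hlastm0 : (Fin.last m) ≠ (0 : Fin (m+1)) := by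
    intro hcon
    have := congrArg Fin.val hcon
    simp at this
    omega
  have hθPlast : θP (Fin.last m) = 1 := by simp [hθP, hlastm0]
  have hθPs : ∀ i, φ (θP i) = t i := by
    intro i
    by_cases h0 : i = 0
    · subst h0
      rw [hθP0, monoSurj_zero hφm hφs, ht0]
    · by_cases h1 : i = Fin.last m
      · subst h1
        rw [hθPlast, monoSurj_one hφm hφs, ht1]
      · simp only [hθP, if_neg h0, if_neg h1]
        exact (hφs (t i)).choose_spec
  set θQ : Fin (k+1) → unitInterval := fun j =>
    if j = 0 then 0 else if j = Fin.last k then 1 else (hψs (s j)).choose with hθQ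
  have hθQ0 : θQ 0 = 0 := by simp [hθQ]
  have hlastk0 : (Fin.last k) ≠ (0 : Fin (k+1)) := by
    intro hcon
    have := congrArg Fin.val hcon
    simp at this
    omega
  have hθQlast : θQ (Fin.last k) = 1 := by simp [hθQ, hlastk0]
  have hθQs : ∀ j, ψ (θQ j) = s j := by
    intro j
    by_cases h0 : j = 0
    · subst h0
      rw [hθQ0, monoSurj_zero hψm hψs, hs0]
    · by_cases h1 : j = Fin.last k
      · subst h1
        rw [hθQlast, monoSurj_one hψm hψs, hs1]
      · simp only [hθQ, if_neg h0, if_neg h1]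
        exact (hψs (s j)).choose_spec
  -- merged sorted event times
  set raw : Fin (m+k+1+1) → unitInterval := fun j =>
    if h : (j:ℕ) < m + 1 then θP ⟨(j:ℕ), h⟩
    else θQ ⟨(j:ℕ) - (m+1), by have := j.isLt; omega⟩ with hraw
  set σ := Tuple.sort raw with hσ
  set E : Fin (m+k+1+1) → unitInterval := raw ∘ σ with hE
  have hEmono : Monotone E := Tuple.monotone_sort raw
  have hEcov : ∀ j0, ∃ j, E j = raw j0 := by
    intro j0
    exact ⟨σ.symm j0, by simp [hE]⟩
  set u : Fin (m+k+1+1) → unitInterval := fun j => U (φ (E j)) with hu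
  set v : Fin (m+k+1+1) → unitInterval := fun j => V (ψ (E j)) with hv
  have humono : Monotone u := fun a b h => hUm (hφm (hEmono h))
  have hvmono : Monotone v := fun a b h => hVm (hψm (hEmono h))
  -- raw hits θP and θQ
  have hrawP : ∀ i : Fin (m+1), raw ⟨(i:ℕ), by have := i.isLt; omega⟩ = θP i := by
    intro i
    have hlt : ((i:ℕ)) < m + 1 := i.isLt
    simp only [hraw]
    rw [dif_pos hlt]
  have hrawQ : ∀ j : Fin (k+1), raw ⟨m + 1 + (j:ℕ), by have := j.isLt; omega⟩ = θQ j := by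
    intro j
    have hlt : ¬ (m + 1 + (j:ℕ) < m + 1) := by omega
    simp only [hraw]
    rw [dif_neg hlt]
    congr 1
    apply Fin.ext
    simp
  -- vertex coverage
  have hucov : ∀ a : Fin (m+1), ∃ j, u j = vparam m a := by
    intro a
    obtain ⟨j, hj⟩ := hEcov ⟨(a:ℕ), by have := a.isLt; omega⟩
    refine ⟨j, ?_⟩
    rw [hu]
    show U (φ (E j)) = vparam m a
    rw [hj, hrawP a, hθPs a, hUv a]
  have hvcov : ∀ b : Fin (k+1), ∃ j, v j = vparam k b := by
    intro b
    obtain ⟨j, hj⟩ := hEcov ⟨m + 1 + (b:ℕ), by have := b.isLt; omega⟩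
    refine ⟨j, ?_⟩
    rw [hv]
    show V (ψ (E j)) = vparam k b
    rw [hj, hrawQ b, hθQs b, hVv b]
  -- endpoints
  have hE0 : E 0 = 0 := by
    obtain ⟨j, hj⟩ := hEcov ⟨0, by omega⟩
    have h0 : raw ⟨0, by omega⟩ = 0 := by
      have : raw ⟨0, by omega⟩ = θP 0 := by
        have := hrawP (0 : Fin (m+1))
        simpa using this
      rw [this, hθP0]
    apply le_antisymm _ (unit_zero_le _)
    calc E 0 ≤ E j := hEmono (Fin.zero_le j)
      _ = 0 := by rw [hj, h0]
  have hElast : E (Fin.last (m+k+1)) = 1 := by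
    obtain ⟨j, hj⟩ := hEcov ⟨(m:ℕ), by omega⟩
    have h1 : raw ⟨(m:ℕ), by omega⟩ = 1 := by
      have : raw ⟨(m:ℕ), by omega⟩ = θP (Fin.last m) := by
        have := hrawP (Fin.last m)
        simpa using this
      rw [this, hθPlast]
    apply le_antisymm (unit_le_one' _) _
    calc (1:unitInterval) = E j := by rw [hj, h1]
      _ ≤ E (Fin.last (m+k+1)) := hEmono (Fin.le_last j)
  have hu0 : u 0 = 0 := by
    rw [hu]
    show U (φ (E 0)) = 0
    have e1 : U (0:unitInterval) = U (t 0) := by rw [ht0]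
    rw [hE0, monoSurj_zero hφm hφs, e1, hUv, vparam_zero]
  have hu1 : u (Fin.last (m+k+1)) = 1 := by
    rw [hu]
    show U (φ (E (Fin.last (m+k+1)))) = 1
    have e1 : U (1:unitInterval) = U (t (Fin.last m)) := by rw [ht1]
    rw [hElast, monoSurj_one hφm hφs, e1, hUv, vparam_last hm]
  have hv0 : v 0 = 0 := by
    rw [hv]
    show V (ψ (E 0)) = 0
    have e1 : V (0:unitInterval) = V (s 0) := by rw [hs0]
    rw [hE0, monoSurj_zero hψm hψs, e1, hVv, vparam_zero]
  have hv1 : v (Fin.last (m+k+1)) = 1 := by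
    rw [hv]
    show V (ψ (E (Fin.last (m+k+1)))) = 1
    have e1 : V (1:unitInterval) = V (s (Fin.last k)) := by rw [hs1]
    rw [hElast, monoSurj_one hψm hψs, e1, hVv, vparam_last hk]
  -- pointwise bound on events
  have hbnd : ∀ j, |polyCurve m (fun i => P (t i)) (u j)
      - polyCurve k (fun i => Q (s i)) (v j)| ≤ 3*δ + ε := by
    intro j
    have hmid := hPQb (E j)
    rw [Real.dist_eq] at hmid
    have hVside := hVb (ψ (E j))
    have hUside := hUb (φ (E j))
    have hEj : E j = raw (σ j) := rfl
    rcases Nat.lt_or_ge ((σ j : ℕ)) (m+1) with hc | hc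
    · -- event is a vertex of the P-signature
      set i : Fin (m+1) := ⟨(σ j : ℕ), hc⟩ with hi
      have hEθ : E j = θP i := by
        rw [hEj, hraw]
        simp only
        rw [dif_pos hc]
      have hφE : φ (E j) = t i := by rw [hEθ, hθPs]
      have huj : u j = vparam m i := by
        rw [hu]
        show U (φ (E j)) = vparam m i
        rw [hφE, hUv]
      have hpv : polyCurve m (fun i' => P (t i')) (u j) = P (t i) := by
        rw [huj, polyCurve_vparam hm]
      rw [hpv]
      rw [hφE] at hmid
      have hvj : v j = V (ψ (E j)) := rfl
      rw [hvj]
      have : |P (t i) - polyCurve k (fun i' => Q (s i')) (V (ψ (E j)))|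
          ≤ |P (t i) - Q (ψ (E j))|
            + |polyCurve k (fun i' => Q (s i')) (V (ψ (E j))) - Q (ψ (E j))| := by
        have h1 := abs_sub_abs_le_abs_sub (P (t i) - Q (ψ (E j)))
          (polyCurve k (fun i' => Q (s i')) (V (ψ (E j))) - Q (ψ (E j)))
        calc |P (t i) - polyCurve k (fun i' => Q (s i')) (V (ψ (E j)))|
            = |(P (t i) - Q (ψ (E j)))
              - (polyCurve k (fun i' => Q (s i')) (V (ψ (E j))) - Q (ψ (E j)))| := by
              ring_nf
          _ ≤ _ := abs_sub _ _
      calc |P (t i) - polyCurve k (fun i' => Q (s i')) (V (ψ (E j)))|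
          ≤ |P (t i) - Q (ψ (E j))|
            + |polyCurve k (fun i' => Q (s i')) (V (ψ (E j))) - Q (ψ (E j))| := this
        _ ≤ (δ + ε/2) + (2*δ + ε/2) := add_le_add hmid hVside
        _ = 3*δ + ε := by ring
    · -- event is a vertex of the Q-signature
      set b : Fin (k+1) := ⟨(σ j : ℕ) - (m+1), by have := (σ j).isLt; omega⟩ with hb
      have hEθ : E j = θQ b := by
        rw [hEj, hraw]
        simp only
        rw [dif_neg (by omega)]
      have hψE : ψ (E j) = s b := by rw [hEθ, hθQs]
      have hvj : v j = vparam k b := by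
        rw [hv]
        show V (ψ (E j)) = vparam k b
        rw [hψE, hVv]
      have hqv : polyCurve k (fun i' => Q (s i')) (v j) = Q (s b) := by
        rw [hvj, polyCurve_vparam hk]
      rw [hqv]
      have huj : u j = U (φ (E j)) := rfl
      rw [huj]
      rw [hψE] at hmid
      calc |polyCurve m (fun i' => P (t i')) (U (φ (E j))) - Q (s b)|
          ≤ |polyCurve m (fun i' => P (t i')) (U (φ (E j))) - P (φ (E j))|
            + |P (φ (E j)) - Q (s b)| := abs_sub_le _ _ _
        _ ≤ (δ + ε/2) + (δ + ε/2) := add_le_add hUside hmid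
        _ ≤ 3*δ + ε := by linarith
  exact frechet_le_of_chain hm hk (by omega) _ _ u v humono hvmono hu0 hu1 hv0 hv1
    hucov hvcov hbnd
end
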